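/- arXiv:1502.02624 — 3 statements merged into one kernel-verified Lean document; each statement's English description precedes it below -/
import Mathlib

section
/- There exists N such that for all n ≥ N the following holds for D = {i : 1 ≤ i ≤ 2^{n+1} − 3, i odd}: the irreducible solutions for D of weight 2 and length 2n−2 are exactly, up to shift, the following solutions of length 2n−2: (1) for each odd i with 3 ≤ i ≤ 15: u_{2^{n+1}−i} = 2^{n−3}, u_{i·2^{n−3}−1} = 1 (all other u_d = 0); (2) for each i ∈ {3, 5, 7}: u_{2^{n}−i} = 2^{n−2}, u_{i·2^{n−2}−1} = 1 (all other u_d = 0); (3) u_{2^{n−1}−3} = 2^{n−1}, u_{3·2^{n−1}−1} = 1 (all other u_d = 0). (In each case ∑ d·u_d = 2^{2n−2} − 1.) -/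
/-- The binary weight `s₂(m)`: the sum of the base-2 digits of `m`. -/
def s2 (m : ℕ) : ℕ := (Nat.digits 2 m).sum

/-- The shift map on `{0, …, 2^ℓ - 1}`: it fixes `2^ℓ - 1` and sends any other `i`
to the remainder of `2·i` modulo `2^ℓ - 1`. -/
def shift2 (ℓ i : ℕ) : ℕ := if i = 2 ^ ℓ - 1 then i else (2 * i) % (2 ^ ℓ - 1)

/-- `U : ℕ → ℕ` (supported on `D`) is a solution of length `ℓ` for `D`:
`0 ≤ u_d ≤ 2^ℓ - 1` and `∑ d·u_d` is a positive multiple of `2^ℓ - 1`. -/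
structure IsSolution (D : Finset ℕ) (ℓ : ℕ) (U : ℕ → ℕ) : Prop where
  len_pos : 1 ≤ ℓ
  bounded : ∀ d, U d ≤ 2 ^ ℓ - 1
  supp_sub : ∀ d, d ∉ D → U d = 0
  dvd : (2 ^ ℓ - 1) ∣ ∑ d ∈ D, d * U d
  pos : 0 < ∑ d ∈ D, d * U d

/-- The weight `s(U) = ∑_{d ∈ D} s₂(u_d)` of a solution. -/
def weight (D : Finset ℕ) (U : ℕ → ℕ) : ℕ := ∑ d ∈ D, s2 (U d)

/-- The support map `φ_U(k) = (∑_{d ∈ D} d·δ^k(u_d)) / (2^ℓ - 1)` of a solution,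
viewed as an `ℓ`-periodic function on `ℕ`. -/
def supportMap (D : Finset ℕ) (ℓ : ℕ) (U : ℕ → ℕ) (k : ℕ) : ℕ :=
  (∑ d ∈ D, d * (shift2 ℓ)^[k] (U d)) / (2 ^ ℓ - 1)

/-- A solution is irreducible when its support map is injective on `ℤ/ℓℤ`,
i.e. injective on `{0, …, ℓ-1}`. -/
def IrreducibleSol (D : Finset ℕ) (ℓ : ℕ) (U : ℕ → ℕ) : Prop :=
  Set.InjOn (supportMap D ℓ U) ↑(Finset.range ℓ)

/-- `U` is a shift of `V` (coordinatewise iterate of the shift map). -/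
def IsShiftOf (ℓ : ℕ) (U V : ℕ → ℕ) : Prop :=
  ∃ k, ∀ d, U d = (shift2 ℓ)^[k] (V d)

/-- The set of odd integers `1 ≤ i ≤ d`. -/
def oddUpTo (d : ℕ) : Finset ℕ := (Finset.range (d + 1)).filter (fun i => i % 2 = 1)

/-- `D = {i : 1 ≤ i ≤ 2^{n+1} - 3, i odd}`. -/
def oddD (n : ℕ) : Finset ℕ := oddUpTo (2 ^ (n + 1) - 3)

/-- The solution with `u_a = 1` and all other coordinates `0`. -/
def sol1 (a : ℕ) : ℕ → ℕ := fun d => if d = a then 1 else 0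

/-- The solution with `u_a = x`, `u_b = y` and all other coordinates `0`. -/
def sol2 (a x b y : ℕ) : ℕ → ℕ := fun d => if d = a then x else if d = b then y else 0

/-- The solution with `u_a = x`, `u_b = y`, `u_c = z` and all other coordinates `0`. -/
def sol3 (a x b y c z : ℕ) : ℕ → ℕ :=
  fun d => if d = a then x else if d = b then y else if d = c then z else 0

lemma s2_zero : s2 0 = 0 := by simp [s2]

lemma s2_eq (x : ℕ) (hx : x ≠ 0) : s2 x = x % 2 + s2 (x / 2) := by
  unfold s2
  rw [Nat.digits_def' (by norm_num : (1:ℕ) < 2) (Nat.pos_of_ne_zero hx)]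
  simp

lemma s2_eq_zero {x : ℕ} (h : s2 x = 0) : x = 0 := by
  induction x using Nat.strong_induction_on with
  | _ x ih =>
    rcases Nat.eq_zero_or_pos x with h0 | h0
    · exact h0
    · rw [s2_eq x h0.ne'] at h
      have := ih (x / 2) (Nat.div_lt_self h0 one_lt_two) (by omega)
      omega

lemma s2_pow (e : ℕ) : s2 (2 ^ e) = 1 := by
  induction e with
  | zero => norm_num [s2]
  | succ e ih =>
    rw [s2_eq _ (Nat.pos_of_ne_zero (by positivity)).ne']
    · have h1 : 2 ^ (e+1) % 2 = 0 := by
        simp [Nat.pow_succ, Nat.mul_mod_left]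
      have h2 : 2 ^ (e+1) / 2 = 2 ^ e := by
        rw [pow_succ]; exact Nat.mul_div_cancel _ (by norm_num)
      rw [h1, h2, ih]

lemma s2_eq_one {x : ℕ} (h : s2 x = 1) : ∃ e, x = 2 ^ e := by
  induction x using Nat.strong_induction_on with
  | _ x ih =>
    rcases Nat.eq_zero_or_pos x with h0 | h0
    · subst h0; simp [s2_zero] at h
    · rw [s2_eq x h0.ne'] at h
      rcases Nat.even_or_odd x with he | ho
      · have hx2 : x % 2 = 0 := Nat.even_iff.mp he
        rw [hx2] at h
        obtain ⟨e, he'⟩ := ih (x / 2) (Nat.div_lt_self h0 one_lt_two) (by omega)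
        exact ⟨e + 1, by rw [pow_succ]; omega⟩
      · have hx2 : x % 2 = 1 := Nat.odd_iff.mp ho
        rw [hx2] at h
        have : x / 2 = 0 := s2_eq_zero (by omega)
        exact ⟨0, by omega⟩

lemma s2_eq_two {x : ℕ} (h : s2 x = 2) : ∃ e1 e2, e1 ≠ e2 ∧ x = 2 ^ e1 + 2 ^ e2 := by
  induction x using Nat.strong_induction_on with
  | _ x ih =>
    rcases Nat.eq_zero_or_pos x with h0 | h0
    · subst h0; simp [s2_zero] at h
    · rw [s2_eq x h0.ne'] at h
      rcases Nat.even_or_odd x with he | ho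
      · have hx2 : x % 2 = 0 := Nat.even_iff.mp he
        rw [hx2] at h
        obtain ⟨e1, e2, hne, he'⟩ := ih (x / 2) (Nat.div_lt_self h0 one_lt_two) (by omega)
        refine ⟨e1 + 1, e2 + 1, by omega, ?_⟩
        rw [pow_succ, pow_succ]; omega
      · have hx2 : x % 2 = 1 := Nat.odd_iff.mp ho
        rw [hx2] at h
        obtain ⟨e, he'⟩ := s2_eq_one (x := x / 2) (by omega)
        refine ⟨e + 1, 0, by omega, ?_⟩
        rw [pow_succ]; omega

section sums
variable {α : Type*} [DecidableEq α]

lemma sum_eq_one_decomp (s : Finset α) (f : α → ℕ) (h : ∑ x ∈ s, f x = 1) :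
    ∃ a ∈ s, f a = 1 ∧ ∀ b ∈ s, b ≠ a → f b = 0 := by
  induction s using Finset.induction_on with
  | empty => simp at h
  | @insert a s' hnotmem ih =>
    rw [Finset.sum_insert hnotmem] at h
    rcases Nat.eq_zero_or_pos (f a) with h0 | h0
    · obtain ⟨b, hb, hfb, hrest⟩ := ih (by omega)
      refine ⟨b, Finset.mem_insert_of_mem hb, hfb, ?_⟩
      intro c hc hcb
      rcases Finset.mem_insert.mp hc with rfl | hc'
      · exact h0
      · exact hrest c hc' hcb
    · have hfa : f a = 1 := by omega
      have hz : ∑ x ∈ s', f x = 0 := by omega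
      refine ⟨a, Finset.mem_insert_self a s', hfa, ?_⟩
      intro c hc hca
      rcases Finset.mem_insert.mp hc with rfl | hc'
      · exact absurd rfl hca
      · exact (Finset.sum_eq_zero_iff.mp hz) c hc'

lemma sum_eq_two_decomp (s : Finset α) (f : α → ℕ) (h : ∑ x ∈ s, f x = 2) :
    (∃ a ∈ s, f a = 2 ∧ ∀ b ∈ s, b ≠ a → f b = 0) ∨
    (∃ a ∈ s, ∃ b ∈ s, a ≠ b ∧ f a = 1 ∧ f b = 1 ∧
      ∀ c ∈ s, c ≠ a → c ≠ b → f c = 0) := by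
  induction s using Finset.induction_on with
  | empty => simp at h
  | @insert a s' hnotmem ih =>
    rw [Finset.sum_insert hnotmem] at h
    rcases Nat.lt_or_ge (f a) 1 with h0 | h0
    · have h0 : f a = 0 := by omega
      rcases ih (by omega) with ⟨b, hb, hfb, hrest⟩ | ⟨b, hb, c, hc, hbc, hfb, hfc, hrest⟩
      · refine Or.inl ⟨b, Finset.mem_insert_of_mem hb, hfb, ?_⟩
        intro d hd hdb
        rcases Finset.mem_insert.mp hd with rfl | hd'
        · exact h0
        · exact hrest d hd' hdb
      · refine Or.inr ⟨b, Finset.mem_insert_of_mem hb, c, Finset.mem_insert_of_mem hc, hbc, hfb, hfc, ?_⟩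
        intro d hd hdb hdc
        rcases Finset.mem_insert.mp hd with rfl | hd'
        · exact h0
        · exact hrest d hd' hdb hdc
    · rcases Nat.lt_or_ge (f a) 2 with h1 | h1
      · have hfa : f a = 1 := by omega
        obtain ⟨b, hb, hfb, hrest⟩ := sum_eq_one_decomp s' f (by omega)
        have hab : a ≠ b := fun hh => hnotmem (hh ▸ hb)
        refine Or.inr ⟨a, Finset.mem_insert_self a s', b, Finset.mem_insert_of_mem hb, hab, hfa, hfb, ?_⟩
        intro d hd hda hdb
        rcases Finset.mem_insert.mp hd with rfl | hd'
        · exact absurd rfl hda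
        · exact hrest d hd' hdb
      · have hfa : f a = 2 := by omega
        have hz : ∑ x ∈ s', f x = 0 := by omega
        refine Or.inl ⟨a, Finset.mem_insert_self a s', hfa, ?_⟩
        intro d hd hda
        rcases Finset.mem_insert.mp hd with rfl | hd'
        · exact absurd rfl hda
        · exact (Finset.sum_eq_zero_iff.mp hz) d hd'

lemma sum_pair_decomp (s : Finset α) (f : α → ℕ) (a b : α) (ha : a ∈ s) (hb : b ∈ s)
    (hab : a ≠ b) (h0 : ∀ c ∈ s, c ≠ a → c ≠ b → f c = 0) :
    ∑ x ∈ s, f x = f a + f b := by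
  have hsub : ({a, b} : Finset α) ⊆ s := by
    intro x hx; rcases Finset.mem_insert.mp hx with rfl | hx
    · exact ha
    · exact (Finset.mem_singleton.mp hx) ▸ hb
  rw [← Finset.sum_subset hsub (fun x hx hnx => h0 x hx
      (fun h => hnx (by simp [h]))
      (fun h => hnx (by simp [h])))]
  exact Finset.sum_pair hab
end sums



lemma two_pow_pos (e : ℕ) : 1 ≤ (2:ℕ)^e := Nat.one_le_two_pow

lemma two_pow_le (a b : ℕ) (h : a ≤ b) : (2:ℕ)^a ≤ 2^b := Nat.pow_le_pow_right (by norm_num) h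

lemma mod_inj_of_lt (ℓ x y k : ℕ) (hx : x < ℓ) (hy : y < ℓ)
    (h : (x + k) % ℓ = (y + k) % ℓ) : x = y := by
  have h' : x ≡ y [MOD ℓ] := Nat.ModEq.add_right_cancel' k h
  have := h'
  unfold Nat.ModEq at this
  rw [Nat.mod_eq_of_lt hx, Nat.mod_eq_of_lt hy] at this
  exact this

lemma shift2_zero (ℓ : ℕ) (hℓ : 1 ≤ ℓ) : shift2 ℓ 0 = 0 := by
  unfold shift2
  have h1 : (2:ℕ) ^ 1 ≤ 2 ^ ℓ := two_pow_le _ _ hℓ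
  rw [if_neg (by omega)]
  simp

lemma shift2_iterate_zero (ℓ k : ℕ) (hℓ : 1 ≤ ℓ) : (shift2 ℓ)^[k] 0 = 0 := by
  induction k with
  | zero => rfl
  | succ k ih => rw [Function.iterate_succ_apply', ih, shift2_zero ℓ hℓ]

lemma pow_lt_M (ℓ e : ℕ) (hℓ : 2 ≤ ℓ) (he : e < ℓ) : (2:ℕ) ^ e < 2 ^ ℓ - 1 := by
  have h1 : (2:ℕ) ^ e ≤ 2 ^ (ℓ - 1) := two_pow_le _ _ (by omega)
  have h2 : (2:ℕ) ^ (ℓ - 1) * 2 = 2 ^ ℓ := by rw [← pow_succ]; congr 1; omega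
  have h3 : (2:ℕ) ^ 1 ≤ 2 ^ (ℓ - 1) := two_pow_le _ _ (by omega)
  norm_num at h3
  omega

lemma two_pow_add_lt_M (ℓ x y : ℕ) (hℓ : 3 ≤ ℓ) (hx : x < ℓ) (hy : y < ℓ) (hxy : x ≠ y) :
    (2:ℕ)^x + 2^y < 2^ℓ - 1 := by
  have hℓ2 : (2:ℕ) ^ 1 ≤ 2 ^ (ℓ - 2) := two_pow_le _ _ (by omega)
  norm_num at hℓ2
  have e1 : (2:ℕ)^(ℓ-2) * 2 = 2^(ℓ-1) := by rw [← pow_succ]; congr 1; omega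
  have e2 : (2:ℕ)^(ℓ-1) * 2 = 2^ℓ := by rw [← pow_succ]; congr 1; omega
  rcases Nat.lt_or_ge x y with h | h
  · have hx' : (2:ℕ)^x ≤ 2^(ℓ-2) := two_pow_le _ _ (by omega)
    have hy' : (2:ℕ)^y ≤ 2^(ℓ-1) := two_pow_le _ _ (by omega)
    omega
  · have h' : y < x := by omega
    have hx' : (2:ℕ)^x ≤ 2^(ℓ-1) := two_pow_le _ _ (by omega)
    have hy' : (2:ℕ)^y ≤ 2^(ℓ-2) := two_pow_le _ _ (by omega)
    omega

lemma shift2_pow (ℓ e : ℕ) (hℓ : 2 ≤ ℓ) (he : e < ℓ) :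
    shift2 ℓ (2 ^ e) = 2 ^ ((e + 1) % ℓ) := by
  unfold shift2
  have hlt : (2:ℕ) ^ e < 2 ^ ℓ - 1 := pow_lt_M ℓ e hℓ he
  rw [if_neg (by omega)]
  have hmul : 2 * 2 ^ e = 2 ^ (e+1) := by rw [pow_succ]; ring
  rw [hmul]
  rcases Nat.lt_or_ge (e + 1) ℓ with h | h
  · rw [Nat.mod_eq_of_lt h]
    exact Nat.mod_eq_of_lt (pow_lt_M ℓ (e+1) hℓ h)
  · have heq : e + 1 = ℓ := by omega
    rw [heq, Nat.mod_self, pow_zero]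
    have h2 : (2:ℕ)^2 ≤ 2 ^ ℓ := two_pow_le _ _ (by omega)
    norm_num at h2
    rw [show (2:ℕ) ^ ℓ = (2^ℓ - 1) + 1 by omega, Nat.add_sub_cancel, Nat.add_comm,
      Nat.add_mod_right]
    exact Nat.mod_eq_of_lt (by omega)

lemma shift2_iterate_pow (ℓ e k : ℕ) (hℓ : 2 ≤ ℓ) (he : e < ℓ) :
    (shift2 ℓ)^[k] (2 ^ e) = 2 ^ ((e + k) % ℓ) := by
  induction k with
  | zero => simp [Nat.mod_eq_of_lt he]
  | succ k ih =>
    rw [Function.iterate_succ_apply', ih,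
      shift2_pow ℓ _ hℓ (Nat.mod_lt _ (by omega))]
    have hA : ((e + k) % ℓ + 1) % ℓ = (e + (k+1)) % ℓ := by
      rw [Nat.mod_add_mod, Nat.add_assoc]
    rw [hA]

lemma shift2_two_pow (ℓ e1 e2 : ℕ) (hℓ : 3 ≤ ℓ) (h1 : e1 < ℓ) (h2 : e2 < ℓ) (hne : e1 ≠ e2) :
    shift2 ℓ (2 ^ e1 + 2 ^ e2) = 2 ^ ((e1 + 1) % ℓ) + 2 ^ ((e2 + 1) % ℓ) := by
  unfold shift2
  rw [if_neg (by have := two_pow_add_lt_M ℓ e1 e2 hℓ h1 h2 hne; omega)]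
  have hmul : 2 * (2^e1 + 2^e2) = 2^(e1+1) + 2^(e2+1) := by ring
  rw [hmul]
  have hM : (2:ℕ)^1 ≤ 2^ℓ := two_pow_le _ _ (by omega)
  norm_num at hM
  rcases Nat.lt_or_ge (e1+1) ℓ with k1 | k1 <;> rcases Nat.lt_or_ge (e2+1) ℓ with k2 | k2
  · rw [Nat.mod_eq_of_lt k1, Nat.mod_eq_of_lt k2]
    exact Nat.mod_eq_of_lt (two_pow_add_lt_M ℓ (e1+1) (e2+1) hℓ k1 k2 (by omega))
  · have he2 : e2 + 1 = ℓ := by omega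
    have he1' : e1 + 1 < ℓ := by omega
    rw [Nat.mod_eq_of_lt he1', he2, Nat.mod_self, pow_zero]
    conv_lhs => rw [show (2:ℕ)^(e1+1) + 2^ℓ = (2^(e1+1) + 1) + (2^ℓ - 1) by omega]
    rw [Nat.add_mod_right]
    have hb := two_pow_add_lt_M ℓ (e1+1) 0 hℓ he1' (by omega) (by omega)
    norm_num at hb
    exact Nat.mod_eq_of_lt (by omega)
  · have he1 : e1 + 1 = ℓ := by omega
    have he2' : e2 + 1 < ℓ := by omega
    rw [Nat.mod_eq_of_lt he2', he1, Nat.mod_self, pow_zero]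
    conv_lhs => rw [show (2:ℕ)^ℓ + 2^(e2+1) = (1 + 2^(e2+1)) + (2^ℓ - 1) by omega]
    rw [Nat.add_mod_right]
    have hb := two_pow_add_lt_M ℓ 0 (e2+1) hℓ (by omega) he2' (by omega)
    norm_num at hb
    exact Nat.mod_eq_of_lt (by omega)
  · omega

lemma shift2_iterate_two_pow (ℓ e1 e2 k : ℕ) (hℓ : 3 ≤ ℓ) (h1 : e1 < ℓ) (h2 : e2 < ℓ)
    (hne : e1 ≠ e2) :
    (shift2 ℓ)^[k] (2 ^ e1 + 2 ^ e2) = 2 ^ ((e1 + k) % ℓ) + 2 ^ ((e2 + k) % ℓ) := by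
  induction k with
  | zero => simp [Nat.mod_eq_of_lt h1, Nat.mod_eq_of_lt h2]
  | succ k ih =>
    rw [Function.iterate_succ_apply', ih]
    rw [shift2_two_pow ℓ _ _ hℓ (Nat.mod_lt _ (by omega)) (Nat.mod_lt _ (by omega))
      (fun hcon => hne (mod_inj_of_lt ℓ e1 e2 k h1 h2 hcon))]
    have hA : ((e1 + k) % ℓ + 1) % ℓ = (e1 + (k+1)) % ℓ := by
      rw [Nat.mod_add_mod, Nat.add_assoc]
    have hB : ((e2 + k) % ℓ + 1) % ℓ = (e2 + (k+1)) % ℓ := by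
      rw [Nat.mod_add_mod, Nat.add_assoc]
    rw [hA, hB]

lemma zmod_two_pow_ℓ (ℓ : ℕ) (hℓ : 1 ≤ ℓ) :
    ((2 : ZMod (2^ℓ - 1)) ^ ℓ) = 1 := by
  have h2 : (2:ℕ)^1 ≤ 2 ^ ℓ := Nat.pow_le_pow_right (by norm_num) hℓ
  norm_num at h2
  calc (2 : ZMod (2^ℓ - 1))^ℓ = ((2^ℓ : ℕ) : ZMod (2^ℓ - 1)) := by push_cast; ring
    _ = (((2^ℓ - 1 : ℕ) : ZMod (2^ℓ - 1)) + ((1:ℕ) : ZMod (2^ℓ - 1))) := by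
        rw [← Nat.cast_add]
        congr 1
        omega
    _ = 1 := by rw [ZMod.natCast_self]; norm_num

lemma zmod_pow_mod (ℓ x : ℕ) (hℓ : 1 ≤ ℓ) :
    ((2 : ZMod (2^ℓ - 1)) ^ x) = 2 ^ (x % ℓ) := by
  conv_lhs => rw [show x = ℓ * (x / ℓ) + x % ℓ by rw [Nat.div_add_mod]]
  rw [pow_add, pow_mul, zmod_two_pow_ℓ ℓ hℓ, one_pow, one_mul]

lemma dvd_shift (ℓ d1 d2 e1 e2 : ℕ) (hℓ : 1 ≤ ℓ) (he2 : e2 ≤ ℓ)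
    (h : (2^ℓ - 1) ∣ (d1 * 2^e1 + d2 * 2^e2)) :
    (2^ℓ - 1) ∣ (d1 * 2^((e1 + (ℓ - e2)) % ℓ) + d2) := by
  have hM : (2:ℕ)^1 ≤ 2 ^ ℓ := Nat.pow_le_pow_right (by norm_num) hℓ
  norm_num at hM
  rcases Nat.eq_or_lt_of_le hM with heq | hlt
  · rw [show (2:ℕ)^ℓ - 1 = 1 by omega]
    exact one_dvd _
  haveI : NeZero ((2:ℕ)^ℓ - 1) := ⟨by omega⟩
  have h0 : ((d1 * 2^e1 + d2 * 2^e2 : ℕ) : ZMod (2^ℓ-1)) = 0 :=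
    (ZMod.natCast_eq_zero_iff _ _).mpr h
  rw [← ZMod.natCast_eq_zero_iff]
  push_cast at h0 ⊢
  have hu : ((2:ZMod (2^ℓ-1))^e2) * ((2:ZMod (2^ℓ-1))^(e2 * (ℓ-1))) = 1 := by
    obtain ⟨n, rfl⟩ : ∃ n, ℓ = n + 1 := ⟨ℓ - 1, by omega⟩
    rw [← pow_add, show e2 + e2 * (n + 1 - 1) = (n+1) * e2 by simp; ring]
    rw [pow_mul, zmod_two_pow_ℓ (n+1) hℓ, one_pow]
  have key : ((2:ZMod (2^ℓ-1)) ^ ((e1 + (ℓ - e2)) % ℓ)) * 2 ^ e2 = 2 ^ e1 := by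
    rw [← zmod_pow_mod ℓ _ hℓ, ← pow_add,
      show e1 + (ℓ - e2) + e2 = e1 + ℓ by omega, pow_add, zmod_two_pow_ℓ ℓ hℓ, mul_one]
  calc (d1 : ZMod (2^ℓ-1)) * 2 ^ ((e1 + (ℓ - e2)) % ℓ) + d2
      = (d1 * 2 ^ ((e1 + (ℓ - e2)) % ℓ) + d2) * ((2^e2) * 2^(e2 * (ℓ-1))) := by
        rw [hu, mul_one]
    _ = (d1 * (2 ^ ((e1 + (ℓ - e2)) % ℓ) * 2^e2) + d2 * 2^e2) * 2^(e2 * (ℓ-1)) := by ring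
    _ = (d1 * 2^e1 + d2 * 2^e2) * 2^(e2 * (ℓ-1)) := by rw [key]
    _ = 0 := by rw [h0, zero_mul]

lemma mod_A (ℓ e1 e2 a : ℕ) (h1 : e1 < ℓ) (h2 : e2 < ℓ)
    (ha : (e1 + (ℓ - e2)) % ℓ = a) : (a + e2) % ℓ = e1 := by
  rw [← ha, Nat.add_comm, Nat.add_mod_mod,
    show e2 + (e1 + (ℓ - e2)) = e1 + ℓ by omega, Nat.add_mod_right, Nat.mod_eq_of_lt h1]

lemma mod_B (ℓ e1 e2 a c : ℕ) (h1 : e1 < ℓ) (h2 : e2 < ℓ)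
    (ha : (e1 + (ℓ - e2)) % ℓ = a) (hc : c + a = ℓ ∨ c + a = 2 * ℓ) :
    (c + e1) % ℓ = e2 := by
  have s1 : (c + a + e2) % ℓ = (c + e1) % ℓ := by
    rw [← ha, show c + (e1 + (ℓ - e2)) % ℓ + e2 = (c + e2) + (e1 + (ℓ - e2)) % ℓ by ring,
      Nat.add_mod_mod, show c + e2 + (e1 + (ℓ - e2)) = (c + e1) + ℓ by omega, Nat.add_mod_right]
  rw [← s1]
  rcases hc with hc | hc
  · rw [show c + a + e2 = ℓ + e2 by omega, Nat.add_mod_left]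
    exact Nat.mod_eq_of_lt h2
  · rw [show c + a + e2 = e2 + ℓ * 2 by omega, Nat.add_mul_mod_self_left]
    exact Nat.mod_eq_of_lt h2

lemma contraA (X t m lam : ℕ) (hX : 1 ≤ X) (hmt : m ≤ t) (hXt : X ≤ t)
    (iA : t * 4096 ≤ X * 2048 + lam) (iB : lam * 2 ≤ X * 2048 + m) : False := by linarith

lemma core (n a m lam d1 d2 : ℕ) (hn : 10 ≤ n)
    (hd1o : d1 % 2 = 1) (hd2o : d2 % 2 = 1)
    (hd1 : d1 ≤ 2^(n+1) - 3) (hd2 : d2 ≤ 2^(n+1) - 3)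
    (ha : 1 ≤ a) (ha' : a < 2*n - 2) (hm : 1 ≤ m) (hlam : 1 ≤ lam)
    (heq1 : m * 2^(2*n-2-a) = d1 + lam) (heq2 : lam * 2^a = d2 + m) (hml : m ≠ lam) :
    (a = n-3 ∧ m = 1 ∧ lam % 2 = 1 ∧ 3 ≤ lam ∧ lam ≤ 15 ∧ d1 + lam = 2^(n+1) ∧ d2 + 1 = lam * 2^(n-3)) ∨
    (a = n-2 ∧ m = 1 ∧ lam % 2 = 1 ∧ 3 ≤ lam ∧ lam ≤ 7 ∧ d1 + lam = 2^n ∧ d2 + 1 = lam * 2^(n-2)) ∨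
    (a = n-1 ∧ m = 1 ∧ lam = 3 ∧ d1 + 3 = 2^(n-1) ∧ d2 + 1 = 3 * 2^(n-1)) ∨
    (a = n-1 ∧ m = 3 ∧ lam = 1 ∧ d1 + 1 = 3 * 2^(n-1) ∧ d2 + 3 = 2^(n-1)) ∨
    (a = n ∧ lam = 1 ∧ m % 2 = 1 ∧ 3 ≤ m ∧ m ≤ 7 ∧ d1 + 1 = m * 2^(n-2) ∧ d2 + m = 2^n) ∨
    (a = n+1 ∧ lam = 1 ∧ m % 2 = 1 ∧ 3 ≤ m ∧ m ≤ 15 ∧ d1 + 1 = m * 2^(n-3) ∧ d2 + m = 2^(n+1)) := by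
  obtain ⟨b, rfl⟩ : ∃ b, n = b + 10 := ⟨n - 10, by omega⟩
  have hX : 1 ≤ (2:ℕ)^b := Nat.one_le_two_pow
  have E : ∀ k : ℕ, (2:ℕ)^(b+k) = 2^b * 2^k := fun k => pow_add 2 b k
  have E7 := E 7; have E8 := E 8; have E9 := E 9; have E10 := E 10; have E11 := E 11
  norm_num at E7 E8 E9 E10 E11
  have hd1' : d1 + 3 ≤ 2^b * 2048 := by
    rw [show b + 10 + 1 = b + 11 by omega, E11] at hd1
    have : (1:ℕ) * 1 ≤ 2^b * 2048 := Nat.mul_le_mul hX (by norm_num)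
    omega
  have hd2' : d2 + 3 ≤ 2^b * 2048 := by
    rw [show b + 10 + 1 = b + 11 by omega, E11] at hd2
    have : (1:ℕ) * 1 ≤ 2^b * 2048 := Nat.mul_le_mul hX (by norm_num)
    omega
  -- parity of m and lam
  have hmodd : m % 2 = 1 := by
    have h2a : (2:ℕ)^a = 2 * 2^(a-1) := by
      rw [← pow_succ']; congr 1; omega
    have heven : lam * 2^a = 2 * (lam * 2^(a-1)) := by rw [h2a]; ring
    rw [heq2] at heven
    omega
  have hlamodd : lam % 2 = 1 := by
    have hα1 : 1 ≤ 2*(b+10)-2-a := by omega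
    have h2a : (2:ℕ)^(2*(b+10)-2-a) = 2 * 2^((2*(b+10)-2-a)-1) := by
      rw [← pow_succ']; congr 1; omega
    have heven : m * 2^(2*(b+10)-2-a) = 2 * (m * 2^((2*(b+10)-2-a)-1)) := by rw [h2a]; ring
    rw [heq1] at heven
    omega
  have hmul : ∀ c q : ℕ, c ≤ q → c * 2^b ≤ q * 2^b := fun c q h => Nat.mul_le_mul h le_rfl
  have hmt : m ≤ m * 2^b := Nat.le_mul_of_pos_right m (by omega)
  have hXt : 2^b ≤ m * 2^b := by
    calc 2^b = 1 * 2^b := (one_mul _).symm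
      _ ≤ m * 2^b := Nat.mul_le_mul hm le_rfl
  have hls : lam ≤ lam * 2^b := Nat.le_mul_of_pos_right lam (by omega)
  have hXs : 2^b ≤ lam * 2^b := by
    calc 2^b = 1 * 2^b := (one_mul _).symm
      _ ≤ lam * 2^b := Nat.mul_le_mul hlam le_rfl
  have hcase : a ≤ b+6 ∨ a = b+7 ∨ a = b+8 ∨ a = b+9 ∨ a = b+10 ∨ a = b+11 ∨ b+12 ≤ a := by
    omega
  rcases hcase with h | rfl | rfl | rfl | rfl | rfl | h
  · -- a ≤ b+6, alpha ≥ b+12 : contradiction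
    exfalso
    have hα : b + 12 ≤ 2*(b+10)-2-a := by omega
    have h1 : (2:ℕ)^(b+12) ≤ 2^(2*(b+10)-2-a) := Nat.pow_le_pow_right (by norm_num) hα
    have h2 : (2:ℕ)^1 ≤ 2^a := Nat.pow_le_pow_right (by norm_num) ha
    norm_num at h2
    have E12 := E 12; norm_num at E12
    have iA : m * 2^b * 4096 ≤ 2^b * 2048 + lam := by
      calc m * 2^b * 4096 = m * 2^(b+12) := by rw [E12]; ring
        _ ≤ m * 2^(2*(b+10)-2-a) := Nat.mul_le_mul_left m h1
        _ = d1 + lam := heq1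
        _ ≤ 2^b * 2048 + lam := by omega
    have iB : lam * 2 ≤ 2^b * 2048 + m := by
      calc lam * 2 ≤ lam * 2^a := Nat.mul_le_mul_left lam h2
        _ = d2 + m := heq2
        _ ≤ 2^b * 2048 + m := by omega
    linarith
  · -- a = b+7 : family 1
    left
    rw [show 2*(b+10)-2-(b+7) = b+11 by omega, E11, show m * (2^b * 2048) = m * 2^b * 2048 by ring] at heq1
    rw [E7, show lam * (2^b * 128) = lam * 2^b * 128 by ring] at heq2
    have hm1 : m = 1 := by
      by_contra hm2
      have h3 : 3 ≤ m := by omega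
      have h3t : 3 * 2^b ≤ m * 2^b := hmul 3 m h3
      linarith
    subst hm1
    have hlam15 : lam ≤ 15 := by
      by_contra hl
      have h16 : 16 ≤ lam := by omega
      have h16s : 16 * 2^b ≤ lam * 2^b := hmul 16 lam h16
      linarith
    refine ⟨by omega, rfl, hlamodd, by omega, hlam15, ?_, ?_⟩
    · rw [show b + 10 + 1 = b + 11 by omega, E11]; omega
    · rw [show b + 10 - 3 = b + 7 by omega, E7, show lam * (2^b * 128) = lam * 2^b * 128 by ring]
      omega
  · -- a = b+8 : family 2
    right; left
    rw [show 2*(b+10)-2-(b+8) = b+10 by omega, E10, show m * (2^b * 1024) = m * 2^b * 1024 by ring] at heq1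
    rw [E8, show lam * (2^b * 256) = lam * 2^b * 256 by ring] at heq2
    have hm1 : m = 1 := by
      by_contra hm2
      have h3 : 3 ≤ m := by omega
      have h3t : 3 * 2^b ≤ m * 2^b := hmul 3 m h3
      linarith
    subst hm1
    have hlam7 : lam ≤ 7 := by
      by_contra hl
      have h8 : 8 ≤ lam := by omega
      have h8s : 8 * 2^b ≤ lam * 2^b := hmul 8 lam h8
      linarith
    refine ⟨by omega, rfl, hlamodd, by omega, hlam7, ?_, ?_⟩
    · rw [E10]; omega
    · rw [show b + 10 - 2 = b + 8 by omega, E8, show lam * (2^b * 256) = lam * 2^b * 256 by ring]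
      omega
  · -- a = b+9 : families 3 / 3'
    rw [show 2*(b+10)-2-(b+9) = b+9 by omega, E9, show m * (2^b * 512) = m * 2^b * 512 by ring] at heq1
    rw [E9, show lam * (2^b * 512) = lam * 2^b * 512 by ring] at heq2
    have hsum : m * 2^b * 512 + lam * 2^b * 512 ≤ 2^b * 4096 + m + lam := by omega
    have hu : m + lam ≤ 8 := by
      by_contra hu'
      have h9 : 9 ≤ m + lam := by omega
      have h9t : 9 * 2^b ≤ (m + lam) * 2^b := hmul 9 (m+lam) h9
      have hexp : (m + lam) * 2^b = m * 2^b + lam * 2^b := by ring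
      linarith
    have hc : (m = 1 ∧ lam = 3) ∨ (m = 3 ∧ lam = 1) ∨ (m = 1 ∧ lam = 5) ∨ (m = 5 ∧ lam = 1)
        ∨ (m = 1 ∧ lam = 7) ∨ (m = 7 ∧ lam = 1) ∨ (m = 3 ∧ lam = 5) ∨ (m = 5 ∧ lam = 3) := by
      omega
    have h5no : ∀ q : ℕ, 5 ≤ q → ¬ (q * 2^b * 512 ≤ 2^b * 2048 + 7) := by
      intro q hq hcon
      have h5t : 5 * 2^b ≤ q * 2^b := hmul 5 q hq
      linarith
    rcases hc with ⟨rfl, rfl⟩ | ⟨rfl, rfl⟩ | ⟨rfl, rfl⟩ | ⟨rfl, rfl⟩ | ⟨rfl, rfl⟩ | ⟨rfl, rfl⟩ | ⟨rfl, rfl⟩ | ⟨rfl, rfl⟩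
    · right; right; left
      refine ⟨by omega, rfl, rfl, ?_, ?_⟩
      · rw [show b + 10 - 1 = b + 9 by omega, E9]; omega
      · rw [show b + 10 - 1 = b + 9 by omega, E9]; omega
    · right; right; right; left
      refine ⟨by omega, rfl, rfl, ?_, ?_⟩
      · rw [show b + 10 - 1 = b + 9 by omega, E9]; omega
      · rw [show b + 10 - 1 = b + 9 by omega, E9]; omega
    · exact absurd (by linarith : 5 * 2^b * 512 ≤ 2^b * 2048 + 7) (h5no 5 le_rfl)
    · exact absurd (by linarith : 5 * 2^b * 512 ≤ 2^b * 2048 + 7) (h5no 5 le_rfl)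
    · exact absurd (by linarith : 7 * 2^b * 512 ≤ 2^b * 2048 + 7) (h5no 7 (by omega))
    · exact absurd (by linarith : 7 * 2^b * 512 ≤ 2^b * 2048 + 7) (h5no 7 (by omega))
    · exact absurd (by linarith : 5 * 2^b * 512 ≤ 2^b * 2048 + 7) (h5no 5 le_rfl)
    · exact absurd (by linarith : 5 * 2^b * 512 ≤ 2^b * 2048 + 7) (h5no 5 le_rfl)
  · -- a = b+10 : family 2'
    right; right; right; right; left
    rw [show 2*(b+10)-2-(b+10) = b+8 by omega, E8, show m * (2^b * 256) = m * 2^b * 256 by ring] at heq1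
    rw [E10, show lam * (2^b * 1024) = lam * 2^b * 1024 by ring] at heq2
    have hl1 : lam = 1 := by
      by_contra hl2
      have h3 : 3 ≤ lam := by omega
      have h3s : 3 * 2^b ≤ lam * 2^b := hmul 3 lam h3
      linarith
    subst hl1
    have hm7 : m ≤ 7 := by
      by_contra hl
      have h8 : 8 ≤ m := by omega
      have h8t : 8 * 2^b ≤ m * 2^b := hmul 8 m h8
      linarith
    refine ⟨by omega, rfl, hmodd, by omega, hm7, ?_, ?_⟩
    · rw [show b + 10 - 2 = b + 8 by omega, E8, show m * (2^b * 256) = m * 2^b * 256 by ring]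
      omega
    · rw [E10]; omega
  · -- a = b+11 : family 1'
    right; right; right; right; right
    rw [show 2*(b+10)-2-(b+11) = b+7 by omega, E7, show m * (2^b * 128) = m * 2^b * 128 by ring] at heq1
    rw [E11, show lam * (2^b * 2048) = lam * 2^b * 2048 by ring] at heq2
    have hl1 : lam = 1 := by
      by_contra hl2
      have h3 : 3 ≤ lam := by omega
      have h3s : 3 * 2^b ≤ lam * 2^b := hmul 3 lam h3
      linarith
    subst hl1
    have hm15 : m ≤ 15 := by
      by_contra hl
      have h16 : 16 ≤ m := by omega
      have h16t : 16 * 2^b ≤ m * 2^b := hmul 16 m h16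
      linarith
    refine ⟨by omega, rfl, hmodd, by omega, hm15, ?_, ?_⟩
    · rw [show b + 10 - 3 = b + 7 by omega, E7, show m * (2^b * 128) = m * 2^b * 128 by ring]
      omega
    · rw [show b + 10 + 1 = b + 11 by omega, E11]; omega
  · -- a ≥ b+12 : contradiction
    exfalso
    have hα1 : 1 ≤ 2*(b+10)-2-a := by omega
    have h1 : (2:ℕ)^(b+12) ≤ 2^a := Nat.pow_le_pow_right (by norm_num) h
    have h2 : (2:ℕ)^1 ≤ 2^(2*(b+10)-2-a) := Nat.pow_le_pow_right (by norm_num) hα1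
    norm_num at h2
    have E12 := E 12; norm_num at E12
    have iA : lam * 2^b * 4096 ≤ 2^b * 2048 + m := by
      calc lam * 2^b * 4096 = lam * 2^(b+12) := by rw [E12]; ring
        _ ≤ lam * 2^a := Nat.mul_le_mul_left lam h1
        _ = d2 + m := heq2
        _ ≤ 2^b * 2048 + m := by omega
    have iB : m * 2 ≤ 2^b * 2048 + lam := by
      calc m * 2 ≤ m * 2^(2*(b+10)-2-a) := Nat.mul_le_mul_left m h2
        _ = d1 + lam := heq1
        _ ≤ 2^b * 2048 + lam := by omega
    exact contraA (2^b) (lam * 2^b) lam m hX hls hXs iA iB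

lemma mem_oddD (n d : ℕ) : d ∈ oddD n ↔ d ≤ 2^(n+1) - 3 ∧ d % 2 = 1 := by
  unfold oddD oddUpTo
  rw [Finset.mem_filter, Finset.mem_range]
  omega

lemma sol2_left (P x Q y : ℕ) : sol2 P x Q y P = x := by simp [sol2]
lemma sol2_right (P x Q y : ℕ) (h : Q ≠ P) : sol2 P x Q y Q = y := by simp [sol2, h]
lemma sol2_other (P x Q y d : ℕ) (h1 : d ≠ P) (h2 : d ≠ Q) : sol2 P x Q y d = 0 := by
  simp [sol2, h1, h2]

lemma sum_sol2 (D : Finset ℕ) (P Q x y : ℕ) (hP : P ∈ D) (hQ : Q ∈ D) (hPQ : P ≠ Q)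
    (F : ℕ → ℕ → ℕ) (hF : ∀ d, F d 0 = 0) :
    ∑ d ∈ D, F d (sol2 P x Q y d) = F P x + F Q y := by
  rw [sum_pair_decomp D (fun d => F d (sol2 P x Q y d)) P Q hP hQ hPQ]
  · rw [sol2_left, sol2_right _ _ _ _ (Ne.symm hPQ)]
  · intro c _ hcP hcQ
    rw [sol2_other _ _ _ _ _ hcP hcQ]
    exact hF c

lemma part1 (n a α i : ℕ) (hn : 10 ≤ n) (haα : a + α = 2*n - 2) (ha : 1 ≤ a)
    (hαn : α ≤ n+1) (haa : a ≤ α) (hi2 : i % 2 = 1) (hi3 : 3 ≤ i) (hi15 : i ≤ 15)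
    (hbound : i * 2^a + 2 ≤ 2^(n+1)) :
    IsSolution (oddD n) (2*n-2) (sol2 (2^α - i) (2^a) (i * 2^a - 1) 1) ∧
    IrreducibleSol (oddD n) (2*n-2) (sol2 (2^α - i) (2^a) (i * 2^a - 1) 1) ∧
    weight (oddD n) (sol2 (2^α - i) (2^a) (i * 2^a - 1) 1) = 2 := by
  have hℓ : 18 ≤ 2*n - 2 := by omega
  have ha7 : 7 ≤ a := by omega
  have hα1 : 1 ≤ α := by omega
  have hA : 128 ≤ (2:ℕ)^a := by
    calc (128:ℕ) = 2^7 := by norm_num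
      _ ≤ 2^a := Nat.pow_le_pow_right (by norm_num) ha7
  have hAα : (2:ℕ)^a ≤ 2^α := Nat.pow_le_pow_right (by norm_num) haa
  have hαn1 : (2:ℕ)^α ≤ 2^(n+1) := Nat.pow_le_pow_right (by norm_num) hαn
  have hEℓ : (2:ℕ)^(2*n-2) = 2^a * 2^α := by rw [← pow_add, haα]
  have hEa : (2:ℕ)^a = 2 * 2^(a-1) := by rw [← pow_succ']; congr 1; omega
  have hEα : (2:ℕ)^α = 2 * 2^(α-1) := by rw [← pow_succ']; congr 1; omega
  set P := 2^α - i with hPdef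
  set Q := i * 2^a - 1 with hQdef
  have hiA : i < 2^a := by omega
  have hiα : i < 2^α := by omega
  have hP1 : P + i = 2^α := by omega
  have hQ1 : Q + 1 = i * 2^a := by
    have : 0 < i * 2^a := by positivity
    omega
  have hPodd : P % 2 = 1 := by omega
  have hQodd : Q % 2 = 1 := by
    have : i * 2^a = 2 * (i * 2^(a-1)) := by rw [hEa]; ring
    omega
  have hPle : P ≤ 2^(n+1) - 3 := by omega
  have hQle : Q ≤ 2^(n+1) - 3 := by omega
  have hPmem : P ∈ oddD n := (mem_oddD n P).mpr ⟨hPle, hPodd⟩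
  have hQmem : Q ∈ oddD n := (mem_oddD n Q).mpr ⟨hQle, hQodd⟩
  have hPQ : P ≠ Q := by
    intro hcon
    -- 2^α + 1 = i * 2^a + i ; mod 2^a
    have hK : (2:ℕ)^α = 2^(α-a) * 2^a := by rw [← pow_add]; congr 1; omega
    have h1 : P + i = 2^(α-a) * 2^a := by rw [← hK]; omega
    have h2 : Q + 1 = i * 2^a := hQ1
    have hKi : 2^(α-a) * 2^a + 1 = i * 2^a + i := by omega
    rcases Nat.lt_trichotomy (2^(α-a)) i with hlt | heq | hgt
    · have : 2^(α-a) * 2^a + 2^a ≤ i * 2^a := by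
        calc 2^(α-a) * 2^a + 2^a = (2^(α-a) + 1) * 2^a := by ring
          _ ≤ i * 2^a := Nat.mul_le_mul (by omega) le_rfl
      omega
    · rw [heq] at hKi; omega
    · have : i * 2^a + 2^a ≤ 2^(α-a) * 2^a := by
        calc i * 2^a + 2^a = (i + 1) * 2^a := by ring
          _ ≤ 2^(α-a) * 2^a := Nat.mul_le_mul (by omega) le_rfl
      omega
  have hMpos : 1 ≤ (2:ℕ)^(2*n-2) - 1 := by
    have : (4:ℕ) ≤ 2^(2*n-2) := by
      calc (4:ℕ) = 2^2 := by norm_num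
        _ ≤ 2^(2*n-2) := Nat.pow_le_pow_right (by norm_num) (by omega)
    omega
  -- the key sum identity
  have hPQmul : P * 2^a = 2^a * 2^α - i * 2^a := by
    rw [hPdef, Nat.sub_mul]; ring_nf
  have hkey : P * 2^a + Q * 1 = 2^(2*n-2) - 1 := by
    rw [hEℓ, mul_one]
    have h1 : i * 2^a ≤ 2^a * 2^α := by
      calc i * 2^a ≤ 2^α * 2^a := Nat.mul_le_mul (by omega) le_rfl
        _ = 2^a * 2^α := by ring
    omega
  -- sum of d * U d
  have hsum0 : ∑ d ∈ oddD n, d * sol2 P (2^a) Q 1 d = 2^(2*n-2) - 1 := by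
    rw [sum_sol2 (oddD n) P Q (2^a) 1 hPmem hQmem hPQ (fun d u => d * u) (fun d => by ring)]
    exact hkey
  -- support map values
  have hiter : ∀ k d, d * (shift2 (2*n-2))^[k] (sol2 P (2^a) Q 1 d) =
      d * sol2 P (2^((a + k) % (2*n-2))) Q (2^(k % (2*n-2))) d := by
    intro k d
    rcases eq_or_ne d P with rfl | hdP
    · rw [sol2_left, sol2_left, shift2_iterate_pow _ _ _ (by omega) (by omega)]
    · rcases eq_or_ne d Q with rfl | hdQ
      · rw [sol2_right _ _ _ _ (Ne.symm hPQ), sol2_right _ _ _ _ (Ne.symm hPQ),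
          show (1:ℕ) = 2^0 by norm_num, shift2_iterate_pow _ _ _ (by omega) (by omega)]
        norm_num
      · rw [sol2_other _ _ _ _ _ hdP hdQ, sol2_other _ _ _ _ _ hdP hdQ,
          shift2_iterate_zero _ _ (by omega)]
  have hval : ∀ k, k < 2*n-2 →
      supportMap (oddD n) (2*n-2) (sol2 P (2^a) Q 1) k =
        if k < α then 2^k else 2^(k-α) * i := by
    intro k hk
    unfold supportMap
    have hrw : ∑ d ∈ oddD n, d * (shift2 (2*n-2))^[k] (sol2 P (2^a) Q 1 d)
        = P * 2^((a + k) % (2*n-2)) + Q * 2^(k % (2*n-2)) := by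
      rw [Finset.sum_congr rfl (fun d _ => hiter k d)]
      rw [sum_sol2 (oddD n) P Q _ _ hPmem hQmem hPQ (fun d u => d * u) (fun d => by ring)]
    rw [hrw, Nat.mod_eq_of_lt hk]
    rcases Nat.lt_or_ge k α with hkα | hkα
    · rw [if_pos hkα, Nat.mod_eq_of_lt (by omega : a + k < 2*n-2)]
      have hnum : P * 2^(a+k) + Q * 2^k = (2^(2*n-2) - 1) * 2^k := by
        calc P * 2^(a+k) + Q * 2^k = (P * 2^a + Q * 1) * 2^k := by rw [pow_add]; ring
          _ = (2^(2*n-2) - 1) * 2^k := by rw [hkey]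
      rw [hnum, mul_comm, Nat.mul_div_cancel _ (by omega)]
    · rw [if_neg (by omega)]
      have hmod : (a + k) % (2*n-2) = k - α := by
        rw [show a + k = (k - α) + (2*n-2) by omega, Nat.add_mod_right]
        exact Nat.mod_eq_of_lt (by omega)
      rw [hmod]
      have hid : P + Q * 2^α = (2^(2*n-2) - 1) * i := by
        have h1 : Q * 2^α = i * 2^a * 2^α - 2^α := by
          rw [hQdef, Nat.sub_mul, one_mul]
        have h2 : i * 2^a * 2^α = i * 2^(2*n-2) := by rw [hEℓ]; ring
        have h3 : (2^(2*n-2) - 1) * i = i * 2^(2*n-2) - i := by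
          rw [Nat.sub_mul, one_mul]; ring_nf
        have h4 : 2^α ≤ i * 2^a * 2^α := Nat.le_mul_of_pos_left _ (by positivity)
        have h5 : i ≤ i * 2^(2*n-2) := Nat.le_mul_of_pos_right _ (by positivity)
        omega
      have hnum : P * 2^(k-α) + Q * 2^k = ((2^(2*n-2) - 1) * i) * 2^(k-α) := by
        calc P * 2^(k-α) + Q * 2^k = (P + Q * 2^α) * 2^(k-α) := by
              rw [show (2:ℕ)^k = 2^α * 2^(k-α) by rw [← pow_add]; congr 1; omega]; ring
          _ = ((2^(2*n-2) - 1) * i) * 2^(k-α) := by rw [hid]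
      rw [hnum, show ((2^(2*n-2)-1) * i) * 2^(k-α) = (2^(2*n-2)-1) * (i * 2^(k-α)) by ring,
        Nat.mul_div_cancel_left _ (by omega : 0 < 2^(2*n-2)-1)]
      ring
  refine ⟨⟨by omega, ?_, ?_, ?_, ?_⟩, ?_, ?_⟩
  · -- bounded
    intro d
    simp only [sol2]
    have h2a : (2:ℕ)^a ≤ 2^(2*n-2) - 1 := by
      have : (2:ℕ)^a ≤ 2^(2*n-3) := Nat.pow_le_pow_right (by norm_num) (by omega)
      have h23 : (2:ℕ)^(2*n-3) * 2 = 2^(2*n-2) := by rw [← pow_succ]; congr 1; omega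
      omega
    split_ifs <;> omega
  · -- support
    intro d hd
    have h1 : d ≠ P := fun h => hd (by rw [h]; exact hPmem)
    have h2 : d ≠ Q := fun h => hd (by rw [h]; exact hQmem)
    exact sol2_other _ _ _ _ _ h1 h2
  · rw [hsum0]
  · rw [hsum0]; omega
  · -- irreducible
    intro k hk k' hk' heq
    simp only [Finset.coe_range, Set.mem_Iio] at hk hk'
    rw [hval k hk, hval k' hk'] at heq
    have hcop : Nat.Coprime 2 i := (Nat.prime_two.coprime_iff_not_dvd).mpr (by omega)
    rcases Nat.lt_or_ge k α with h1 | h1 <;> rcases Nat.lt_or_ge k' α with h2 | h2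
    · rw [if_pos h1, if_pos h2] at heq
      exact Nat.pow_right_injective (le_refl 2) heq
    · rw [if_pos h1, if_neg (by omega)] at heq
      exfalso
      have hdvd : i ∣ 2^k := ⟨2^(k'-α), by rw [heq]; ring⟩
      have := Nat.Coprime.eq_one_of_dvd ((hcop.pow_left k).symm) hdvd
      omega
    · rw [if_neg (by omega), if_pos h2] at heq
      exfalso
      have hdvd : i ∣ 2^k' := ⟨2^(k-α), by rw [← heq]; ring⟩
      have := Nat.Coprime.eq_one_of_dvd ((hcop.pow_left k').symm) hdvd
      omega
    · rw [if_neg (by omega), if_neg (by omega)] at heq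
      have := Nat.eq_of_mul_eq_mul_right (by omega : 0 < i) heq
      have := Nat.pow_right_injective (le_refl 2) this
      omega
  · -- weight
    unfold weight
    rw [sum_sol2 (oddD n) P Q _ _ hPmem hQmem hPQ (fun _ u => s2 u) (fun _ => s2_zero)]
    have h1 : s2 1 = 1 := by rw [show (1:ℕ) = 2^0 by norm_num]; exact s2_pow 0
    rw [s2_pow, h1]
lemma mod_small (x ℓ : ℕ) (h : x < 2*ℓ) (hℓ : 0 < ℓ) : x % ℓ = x ∨ x % ℓ + ℓ = x := by
  rcases Nat.lt_or_ge x ℓ with h1 | h1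
  · left; exact Nat.mod_eq_of_lt h1
  · right
    rw [Nat.mod_eq_sub_mod h1, Nat.mod_eq_of_lt (by omega)]
    omega

lemma analyze (n : ℕ) (hn : 10 ≤ n) (U : ℕ → ℕ) (d1 d2 e1 e2 : ℕ)
    (hd1 : d1 ∈ oddD n) (hd2 : d2 ∈ oddD n) (he1 : e1 < 2*n-2) (he2 : e2 < 2*n-2)
    (hsum : ∀ k, ∑ d ∈ oddD n, d * (shift2 (2*n-2))^[k] (U d)
        = d1 * 2 ^ ((e1 + k) % (2*n-2)) + d2 * 2 ^ ((e2 + k) % (2*n-2)))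
    (hirr : IrreducibleSol (oddD n) (2*n-2) U)
    (hdvd : (2^(2*n-2) - 1) ∣ (d1 * 2^e1 + d2 * 2^e2)) :
    ∃ a lam m, (e1 + ((2*n-2) - e2)) % (2*n-2) = a ∧
    ((a = n-3 ∧ m = 1 ∧ lam % 2 = 1 ∧ 3 ≤ lam ∧ lam ≤ 15 ∧ d1 + lam = 2^(n+1) ∧ d2 + 1 = lam * 2^(n-3)) ∨
    (a = n-2 ∧ m = 1 ∧ lam % 2 = 1 ∧ 3 ≤ lam ∧ lam ≤ 7 ∧ d1 + lam = 2^n ∧ d2 + 1 = lam * 2^(n-2)) ∨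
    (a = n-1 ∧ m = 1 ∧ lam = 3 ∧ d1 + 3 = 2^(n-1) ∧ d2 + 1 = 3 * 2^(n-1)) ∨
    (a = n-1 ∧ m = 3 ∧ lam = 1 ∧ d1 + 1 = 3 * 2^(n-1) ∧ d2 + 3 = 2^(n-1)) ∨
    (a = n ∧ lam = 1 ∧ m % 2 = 1 ∧ 3 ≤ m ∧ m ≤ 7 ∧ d1 + 1 = m * 2^(n-2) ∧ d2 + m = 2^n) ∨
    (a = n+1 ∧ lam = 1 ∧ m % 2 = 1 ∧ 3 ≤ m ∧ m ≤ 15 ∧ d1 + 1 = m * 2^(n-3) ∧ d2 + m = 2^(n+1))) := by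
  have hℓ18 : 18 ≤ 2*n-2 := by omega
  have hpow4 : (4:ℕ) ≤ 2^(2*n-2) := by
    calc (4:ℕ) = 2^2 := by norm_num
      _ ≤ 2^(2*n-2) := Nat.pow_le_pow_right (by norm_num) (by omega)
  have hn2 : (2:ℕ)^(n+2) = 2 * 2^(n+1) := by rw [pow_succ]; ring
  have hn2le : (2:ℕ)^(n+2) ≤ 2^(2*n-2) := Nat.pow_le_pow_right (by norm_num) (by omega)
  obtain ⟨hd1le, hd1o⟩ := (mem_oddD n d1).mp hd1
  obtain ⟨hd2le, hd2o⟩ := (mem_oddD n d2).mp hd2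
  have hd1p : 1 ≤ d1 := by omega
  have hd2p : 1 ≤ d2 := by omega
  have hd1le' : d1 ≤ 2^(n+1) := by
    have h21 : (2:ℕ)^1 ≤ 2^(n+1) := Nat.pow_le_pow_right (by norm_num) (by omega)
    norm_num at h21
    omega
  set a := (e1 + ((2*n-2) - e2)) % (2*n-2) with hadef
  have haℓ : a < 2*n-2 := Nat.mod_lt _ (by omega)
  have hdvd2 : (2^(2*n-2) - 1) ∣ (d1 * 2^a + d2) :=
    dvd_shift (2*n-2) d1 d2 e1 e2 (by omega) (by omega) hdvd
  have ha1 : 1 ≤ a := by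
    rcases Nat.eq_zero_or_pos a with h0 | h0
    · exfalso
      rw [h0, pow_zero, mul_one] at hdvd2
      have hle := Nat.le_of_dvd (by omega) hdvd2
      omega
    · exact h0
  -- extract m
  set m := (d1 * 2^a + d2) / (2^(2*n-2) - 1) with hmdef
  have hmM : m * (2^(2*n-2) - 1) = d1 * 2^a + d2 := Nat.div_mul_cancel hdvd2
  have hm1 : 1 ≤ m := by
    rcases Nat.eq_zero_or_pos m with h0 | h0
    · exfalso; rw [h0, zero_mul] at hmM; omega
    · exact h0
  have hmsub : m * (2^(2*n-2) - 1) = m * 2^(2*n-2) - m := by rw [Nat.mul_sub, mul_one]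
  have hmle : m ≤ m * 2^(2*n-2) := Nat.le_mul_of_pos_right m (by omega)
  have hm2ℓ : m * 2^(2*n-2) = d1 * 2^a + d2 + m := by omega
  have hsplit : (2:ℕ)^(2*n-2) = 2^(2*n-2-a) * 2^a := by rw [← pow_add]; congr 1; omega
  set W := m * 2^(2*n-2-a) with hWdef
  have hW2 : W * 2^a = d1 * 2^a + (d2 + m) := by
    calc W * 2^a = m * (2^(2*n-2-a) * 2^a) := by rw [hWdef]; ring
      _ = m * 2^(2*n-2) := by rw [← hsplit]
      _ = d1 * 2^a + (d2 + m) := by omega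
  have hWd1 : d1 < W := by
    by_contra hcon
    have : W * 2^a ≤ d1 * 2^a := Nat.mul_le_mul (by omega) le_rfl
    omega
  set lam := W - d1 with hlamdef
  have heq1 : m * 2^(2*n-2-a) = d1 + lam := by rw [← hWdef]; omega
  have heq2 : lam * 2^a = d2 + m := by
    have : lam * 2^a = W * 2^a - d1 * 2^a := by rw [hlamdef, Nat.sub_mul]
    omega
  have hlam1 : 1 ≤ lam := by omega
  -- m ≠ lam via irreducibility
  have hml : m ≠ lam := by
    intro hcon
    set k := ((2*n-2) - e2) % (2*n-2) with hkdef
    set k' := ((2*n-2) - e2 + (2*n-2-a)) % (2*n-2) with hk'def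
    have hkℓ : k < 2*n-2 := Nat.mod_lt _ (by omega)
    have hk'ℓ : k' < 2*n-2 := Nat.mod_lt _ (by omega)
    have hkne : k ≠ k' := by
      have h1 := mod_small ((2*n-2) - e2) (2*n-2) (by omega) (by omega)
      have h2 := mod_small ((2*n-2) - e2 + (2*n-2-a)) (2*n-2) (by omega) (by omega)
      rw [← hkdef] at h1
      rw [← hk'def] at h2
      omega
    have v1 : (e1 + k) % (2*n-2) = a := by
      rw [hkdef, Nat.add_mod_mod, hadef]
    have v2 : (e2 + k) % (2*n-2) = 0 := by
      rw [hkdef, Nat.add_mod_mod, show e2 + ((2*n-2) - e2) = 2*n-2 by omega, Nat.mod_self]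
    have v1' : (e1 + k') % (2*n-2) = 0 := by
      rw [hk'def, Nat.add_mod_mod, show e1 + ((2*n-2) - e2 + (2*n-2-a)) =
        (e1 + ((2*n-2) - e2)) + (2*n-2-a) by omega, ← Nat.mod_add_mod, ← hadef,
        show a + (2*n-2-a) = 2*n-2 by omega, Nat.mod_self]
    have v2' : (e2 + k') % (2*n-2) = 2*n-2-a := by
      rw [hk'def, Nat.add_mod_mod, show e2 + ((2*n-2) - e2 + (2*n-2-a)) =
        (2*n-2-a) + (2*n-2) by omega, Nat.add_mod_right]
      exact Nat.mod_eq_of_lt (by omega)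
    have hs1 : supportMap (oddD n) (2*n-2) U k = m := by
      unfold supportMap
      rw [hsum k, v1, v2, pow_zero, mul_one, ← hmM, Nat.mul_div_cancel _ (by omega)]
    have hs2 : supportMap (oddD n) (2*n-2) U k' = lam := by
      unfold supportMap
      rw [hsum k', v1', v2', pow_zero, mul_one]
      have c1 : lam * 2^(2*n-2) = (d2 + m) * 2^(2*n-2-a) := by
        calc lam * 2^(2*n-2) = (lam * 2^a) * 2^(2*n-2-a) := by rw [hsplit]; ring
          _ = (d2 + m) * 2^(2*n-2-a) := by rw [heq2]
      have c2 : (d2 + m) * 2^(2*n-2-a) = d2 * 2^(2*n-2-a) + (d1 + lam) := by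
        rw [add_mul, heq1]
      have c3 : lam * (2^(2*n-2) - 1) = lam * 2^(2*n-2) - lam := by rw [Nat.mul_sub, mul_one]
      have c4 : lam ≤ lam * 2^(2*n-2) := Nat.le_mul_of_pos_right lam (by omega)
      have c5 : d1 + d2 * 2^(2*n-2-a) = lam * (2^(2*n-2) - 1) := by omega
      rw [c5, Nat.mul_comm, Nat.mul_div_cancel_left _ (by omega)]
    have hmem1 : k ∈ ((Finset.range (2*n-2) : Finset ℕ) : Set ℕ) := by
      simp only [Finset.coe_range, Set.mem_Iio]; exact hkℓ
    have hmem2 : k' ∈ ((Finset.range (2*n-2) : Finset ℕ) : Set ℕ) := by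
      simp only [Finset.coe_range, Set.mem_Iio]; exact hk'ℓ
    exact hkne (hirr hmem1 hmem2 (by rw [hs1, hs2, hcon]))
  obtain h := core n a m lam d1 d2 hn hd1o hd2o hd1le hd2le ha1 haℓ hm1 hlam1 heq1 heq2 hml
  exact ⟨a, lam, m, rfl, h⟩

lemma exp_lt (ℓ f : ℕ) (h : 2^f ≤ 2^ℓ - 1) : f < ℓ := by
  by_contra h'
  have h1 : (2:ℕ)^ℓ ≤ 2^f := Nat.pow_le_pow_right (by norm_num) (by omega)
  have h2 : (1:ℕ) ≤ 2^ℓ := Nat.one_le_two_pow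
  omega

lemma shift_match (n : ℕ) (hn : 10 ≤ n) (U : ℕ → ℕ) (P Q xP e1 e2 : ℕ)
    (hPQ : P ≠ Q) (hUP : U P = 2^e1) (hUQ : U Q = 2^e2)
    (hU0 : ∀ c, c ≠ P → c ≠ Q → U c = 0)
    (he2 : e2 < 2*n-2) (hxP : xP < 2*n-2)
    (hmod : (xP + e2) % (2*n-2) = e1) :
    IsShiftOf (2*n-2) U (sol2 P (2^xP) Q 1) := by
  refine ⟨e2, fun c => ?_⟩
  rcases eq_or_ne c P with rfl | hcP
  · rw [sol2_left, shift2_iterate_pow _ _ _ (by omega) hxP, hmod, hUP]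
  · rcases eq_or_ne c Q with rfl | hcQ
    · rw [sol2_right _ _ _ _ (Ne.symm hPQ), show (1:ℕ) = 2^0 by norm_num,
        shift2_iterate_pow _ _ _ (by omega) (by omega), hUQ]
      congr 1
      rw [Nat.zero_add, Nat.mod_eq_of_lt he2]
    · rw [sol2_other _ _ _ _ _ hcP hcQ, shift2_iterate_zero _ _ (by omega), hU0 c hcP hcQ]

/-- For `n` large enough and `D = {i : 1 ≤ i ≤ 2^{n+1} − 3, i odd}`, the irreducible
solutions of weight `2` and length `2n−2` are exactly, up to shift:
`2^{n−3}·(2^{n+1} − i) + 1·(i·2^{n−3} − 1)` for odd `3 ≤ i ≤ 15`;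
`2^{n−2}·(2^n − i) + 1·(i·2^{n−2} − 1)` for `i ∈ {3,5,7}`;
`2^{n−1}·(2^{n−1} − 3) + 1·(3·2^{n−1} − 1)`. -/
theorem weight_two_length_2n_sub_two_solutions :
    ∃ N : ℕ, ∀ n : ℕ, N ≤ n →
      (∀ i ∈ ({3, 5, 7, 9, 11, 13, 15} : Finset ℕ),
        IsSolution (oddD n) (2 * n - 2) (sol2 (2 ^ (n + 1) - i) (2 ^ (n - 3)) (i * 2 ^ (n - 3) - 1) 1) ∧
        IrreducibleSol (oddD n) (2 * n - 2) (sol2 (2 ^ (n + 1) - i) (2 ^ (n - 3)) (i * 2 ^ (n - 3) - 1) 1) ∧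
        weight (oddD n) (sol2 (2 ^ (n + 1) - i) (2 ^ (n - 3)) (i * 2 ^ (n - 3) - 1) 1) = 2) ∧
      (∀ i ∈ ({3, 5, 7} : Finset ℕ),
        IsSolution (oddD n) (2 * n - 2) (sol2 (2 ^ n - i) (2 ^ (n - 2)) (i * 2 ^ (n - 2) - 1) 1) ∧
        IrreducibleSol (oddD n) (2 * n - 2) (sol2 (2 ^ n - i) (2 ^ (n - 2)) (i * 2 ^ (n - 2) - 1) 1) ∧
        weight (oddD n) (sol2 (2 ^ n - i) (2 ^ (n - 2)) (i * 2 ^ (n - 2) - 1) 1) = 2) ∧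
      (IsSolution (oddD n) (2 * n - 2) (sol2 (2 ^ (n - 1) - 3) (2 ^ (n - 1)) (3 * 2 ^ (n - 1) - 1) 1) ∧
        IrreducibleSol (oddD n) (2 * n - 2) (sol2 (2 ^ (n - 1) - 3) (2 ^ (n - 1)) (3 * 2 ^ (n - 1) - 1) 1) ∧
        weight (oddD n) (sol2 (2 ^ (n - 1) - 3) (2 ^ (n - 1)) (3 * 2 ^ (n - 1) - 1) 1) = 2) ∧
      (∀ U, IsSolution (oddD n) (2 * n - 2) U → IrreducibleSol (oddD n) (2 * n - 2) U →
        weight (oddD n) U = 2 →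
        (∃ i ∈ ({3, 5, 7, 9, 11, 13, 15} : Finset ℕ),
          IsShiftOf (2 * n - 2) U (sol2 (2 ^ (n + 1) - i) (2 ^ (n - 3)) (i * 2 ^ (n - 3) - 1) 1)) ∨
        (∃ i ∈ ({3, 5, 7} : Finset ℕ),
          IsShiftOf (2 * n - 2) U (sol2 (2 ^ n - i) (2 ^ (n - 2)) (i * 2 ^ (n - 2) - 1) 1)) ∨
        IsShiftOf (2 * n - 2) U (sol2 (2 ^ (n - 1) - 3) (2 ^ (n - 1)) (3 * 2 ^ (n - 1) - 1) 1)) := by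
  refine ⟨10, fun n hn => ?_⟩
  have hX : 128 ≤ (2:ℕ)^(n-3) := by
    calc (128:ℕ) = 2^7 := by norm_num
      _ ≤ 2^(n-3) := Nat.pow_le_pow_right (by norm_num) (by omega)
  have EX3 : (2:ℕ)^(n+1) = 16 * 2^(n-3) := by
    have h : (2:ℕ)^(n+1) = 2^((n-3)+4) := by congr 1; omega
    rw [h, pow_add]; ring
  have EX2 : (2:ℕ)^n = 8 * 2^(n-3) := by
    have h : (2:ℕ)^n = 2^((n-3)+3) := by congr 1; omega
    rw [h, pow_add]; ring
  have EX1 : (2:ℕ)^(n-1) = 4 * 2^(n-3) := by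
    have h : (2:ℕ)^(n-1) = 2^((n-3)+2) := by congr 1; omega
    rw [h, pow_add]; ring
  have EX0 : (2:ℕ)^(n-2) = 2 * 2^(n-3) := by
    have h : (2:ℕ)^(n-2) = 2^((n-3)+1) := by congr 1; omega
    rw [h, pow_add]; ring
  refine ⟨?_, ?_, ?_, ?_⟩
  · intro i hi
    fin_cases hi <;>
      exact part1 n (n-3) (n+1) _ hn (by omega) (by omega) (by omega) (by omega)
        (by norm_num) (by norm_num) (by norm_num) (by omega)
  · intro i hi
    fin_cases hi <;>
      exact part1 n (n-2) n _ hn (by omega) (by omega) (by omega) (by omega)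
        (by norm_num) (by norm_num) (by norm_num) (by omega)
  · exact part1 n (n-1) (n-1) 3 hn (by omega) (by omega) (by omega) (by omega)
      (by norm_num) (by norm_num) (by norm_num) (by omega)
  · intro U hU hirr hw
    have hℓ1 : (1:ℕ) ≤ 2^(2*n-2) := Nat.one_le_two_pow
    unfold weight at hw
    rcases sum_eq_two_decomp (oddD n) (fun d => s2 (U d)) hw with
      ⟨d, hdmem, hs2d, hrest⟩ | ⟨p, hp, q, hq, hpq, hsp, hsq, hrest⟩
    · -- one coordinate with two bits : impossible
      exfalso
      obtain ⟨f1, f2, hfne, hUd⟩ := s2_eq_two hs2d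
      have hbd := hU.bounded d
      rw [hUd] at hbd
      have hf1 : f1 < 2*n-2 := exp_lt _ _ (le_trans (Nat.le_add_right _ _) hbd)
      have hf2 : f2 < 2*n-2 := exp_lt _ _ (le_trans (Nat.le_add_left _ _) hbd)
      have hU0 : ∀ c ∈ oddD n, c ≠ d → U c = 0 := fun c hc hcd => s2_eq_zero (hrest c hc hcd)
      have hsum : ∀ k, ∑ c ∈ oddD n, c * (shift2 (2*n-2))^[k] (U c)
          = d * 2 ^ ((f1 + k) % (2*n-2)) + d * 2 ^ ((f2 + k) % (2*n-2)) := by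
        intro k
        rw [Finset.sum_eq_single_of_mem d hdmem (fun c hc hcd => by
          rw [hU0 c hc hcd, shift2_iterate_zero _ _ (by omega), mul_zero])]
        rw [hUd, shift2_iterate_two_pow _ _ _ _ (by omega) hf1 hf2 hfne, mul_add]
      have hdvd : (2^(2*n-2) - 1) ∣ (d * 2^f1 + d * 2^f2) := by
        have hs0 : ∑ c ∈ oddD n, c * U c = d * 2^f1 + d * 2^f2 := by
          rw [Finset.sum_eq_single_of_mem d hdmem (fun c hc hcd => by
            rw [hU0 c hc hcd, mul_zero])]
          rw [hUd, mul_add]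
        have h := hU.dvd
        rw [hs0] at h
        exact h
      obtain ⟨a, lam, m, ha, hdisj⟩ := analyze n hn U d d f1 f2 hdmem hdmem hf1 hf2 hsum hirr hdvd
      rcases hdisj with ⟨_, _, _, h3, h15, hA, hB⟩ | ⟨_, _, _, h3, h15, hA, hB⟩ |
        ⟨_, _, _, hA, hB⟩ | ⟨_, _, _, hA, hB⟩ | ⟨_, _, _, h3, h15, hA, hB⟩ |
        ⟨_, _, _, h3, h15, hA, hB⟩
      · interval_cases lam <;> omega
      · interval_cases lam <;> omega
      · omega
      · omega
      · interval_cases m <;> omega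
      · interval_cases m <;> omega
    · -- two coordinates
      obtain ⟨f1, hUp⟩ := s2_eq_one hsp
      obtain ⟨f2, hUq⟩ := s2_eq_one hsq
      have hbd1 := hU.bounded p
      have hbd2 := hU.bounded q
      rw [hUp] at hbd1
      rw [hUq] at hbd2
      have hf1 : f1 < 2*n-2 := exp_lt _ _ hbd1
      have hf2 : f2 < 2*n-2 := exp_lt _ _ hbd2
      have hU0 : ∀ c, c ≠ p → c ≠ q → U c = 0 := by
        intro c hcp hcq
        by_cases hc : c ∈ oddD n
        · exact s2_eq_zero (hrest c hc hcp hcq)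
        · exact hU.supp_sub c hc
      have hsum : ∀ k, ∑ c ∈ oddD n, c * (shift2 (2*n-2))^[k] (U c)
          = p * 2 ^ ((f1 + k) % (2*n-2)) + q * 2 ^ ((f2 + k) % (2*n-2)) := by
        intro k
        rw [sum_pair_decomp (oddD n) _ p q hp hq hpq (fun c _ hcp hcq => by
          rw [hU0 c hcp hcq, shift2_iterate_zero _ _ (by omega), mul_zero])]
        rw [hUp, hUq, shift2_iterate_pow _ _ _ (by omega) hf1,
          shift2_iterate_pow _ _ _ (by omega) hf2]
      have hdvd : (2^(2*n-2) - 1) ∣ (p * 2^f1 + q * 2^f2) := by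
        have hs0 : ∑ c ∈ oddD n, c * U c = p * 2^f1 + q * 2^f2 := by
          rw [sum_pair_decomp (oddD n) _ p q hp hq hpq (fun c _ hcp hcq => by
            rw [hU0 c hcp hcq, mul_zero])]
          rw [hUp, hUq]
        have h := hU.dvd
        rw [hs0] at h
        exact h
      obtain ⟨a, lam, m, ha, hdisj⟩ := analyze n hn U p q f1 f2 hp hq hf1 hf2 hsum hirr hdvd
      rcases hdisj with ⟨ha', _, hlo, h3, h15, hA, hB⟩ | ⟨ha', _, hlo, h3, h15, hA, hB⟩ |
        ⟨ha', _, hlam, hA, hB⟩ | ⟨ha', hm, _, hA, hB⟩ | ⟨ha', _, hmo, h3, h15, hA, hB⟩ |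
        ⟨ha', _, hmo, h3, h15, hA, hB⟩
      · -- family 1
        left
        refine ⟨lam, by simp only [Finset.mem_insert, Finset.mem_singleton]; omega, ?_⟩
        rw [show 2^(n+1) - lam = p by omega, show lam * 2^(n-3) - 1 = q by omega]
        have hmod : ((n-3) + f2) % (2*n-2) = f1 := by
          have h := mod_A (2*n-2) f1 f2 a hf1 hf2 ha
          rw [ha'] at h
          exact h
        exact shift_match n hn U p q (n-3) f1 f2 hpq hUp hUq hU0 hf2 (by omega) hmod
      · -- family 2
        right; left
        refine ⟨lam, by simp only [Finset.mem_insert, Finset.mem_singleton]; omega, ?_⟩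
        rw [show 2^n - lam = p by omega, show lam * 2^(n-2) - 1 = q by omega]
        have hmod : ((n-2) + f2) % (2*n-2) = f1 := by
          have h := mod_A (2*n-2) f1 f2 a hf1 hf2 ha
          rw [ha'] at h
          exact h
        exact shift_match n hn U p q (n-2) f1 f2 hpq hUp hUq hU0 hf2 (by omega) hmod
      · -- family 3
        right; right
        rw [show 2^(n-1) - 3 = p by omega, show 3 * 2^(n-1) - 1 = q by omega]
        have hmod : ((n-1) + f2) % (2*n-2) = f1 := by
          have h := mod_A (2*n-2) f1 f2 a hf1 hf2 ha
          rw [ha'] at h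
          exact h
        exact shift_match n hn U p q (n-1) f1 f2 hpq hUp hUq hU0 hf2 (by omega) hmod
      · -- family 3 swapped
        right; right
        rw [show 2^(n-1) - 3 = q by omega, show 3 * 2^(n-1) - 1 = p by omega]
        have hmod : ((n-1) + f1) % (2*n-2) = f2 := by
          exact mod_B (2*n-2) f1 f2 a (n-1) hf1 hf2 ha (Or.inl (by omega))
        exact shift_match n hn U q p (n-1) f2 f1 (Ne.symm hpq) hUq hUp
          (fun c h1 h2 => hU0 c h2 h1) hf1 (by omega) hmod
      · -- family 2 swapped
        right; left
        refine ⟨m, by simp only [Finset.mem_insert, Finset.mem_singleton]; omega, ?_⟩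
        rw [show 2^n - m = q by omega, show m * 2^(n-2) - 1 = p by omega]
        have hmod : ((n-2) + f1) % (2*n-2) = f2 := by
          exact mod_B (2*n-2) f1 f2 a (n-2) hf1 hf2 ha (Or.inl (by omega))
        exact shift_match n hn U q p (n-2) f2 f1 (Ne.symm hpq) hUq hUp
          (fun c h1 h2 => hU0 c h2 h1) hf1 (by omega) hmod
      · -- family 1 swapped
        left
        refine ⟨m, by simp only [Finset.mem_insert, Finset.mem_singleton]; omega, ?_⟩
        rw [show 2^(n+1) - m = q by omega, show m * 2^(n-3) - 1 = p by omega]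
        have hmod : ((n-3) + f1) % (2*n-2) = f2 := by
          exact mod_B (2*n-2) f1 f2 a (n-3) hf1 hf2 ha (Or.inl (by omega))
        exact shift_match n hn U q p (n-3) f2 f1 (Ne.symm hpq) hUq hUp
          (fun c h1 h2 => hU0 c h2 h1) hf1 (by omega) hmod
end

section
/- There exists N such that for all n ≥ N and every odd integer d with 3·2^{n−1} − 1 ≤ d < 2^{n+1} − 7, the 2-density of the set D := {i : 1 ≤ i ≤ d, i odd} \ {2^n − 1} equals 2/(2n−1); that is, every solution U of any length ℓ for D satisfies (2n−1)·s(U) ≥ 2ℓ, and some solution attains (2n−1)·s(U) = 2ℓ. -/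
namespace D2A

def ebit (ℓ v : ℕ) : ℕ := if 2 ^ ℓ - 1 ≤ 2 * v then 1 else 0

lemma ebit_le_one (ℓ v : ℕ) : ebit ℓ v ≤ 1 := by unfold ebit; split <;> omega

lemma s2_zero : s2 0 = 0 := by simp [s2]

lemma s2_one : s2 1 = 1 := by simp [s2]

lemma s2_double (m : ℕ) (hm : 0 < m) : s2 (2 * m) = s2 m := by
  unfold s2
  rw [Nat.digits_def' (by norm_num : (1:ℕ) < 2) (by omega : 0 < 2*m)]
  simp

lemma s2_double_add_one (m : ℕ) : s2 (2 * m + 1) = s2 m + 1 := by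
  unfold s2
  rw [Nat.digits_def' (by norm_num : (1:ℕ) < 2) (by omega : 0 < 2*m+1)]
  simp [Nat.mul_add_mod, Nat.mul_add_div]
  omega

lemma s2_two_pow (k : ℕ) : s2 (2 ^ k) = 1 := by
  induction k with
  | zero => exact s2_one
  | succ k ih => rw [pow_succ, mul_comm, s2_double _ (by positivity)]; exact ih

lemma s2_pow_sub_one (ℓ : ℕ) : s2 (2 ^ ℓ - 1) = ℓ := by
  induction ℓ with
  | zero => simp [s2_zero]
  | succ ℓ ih =>
    have h1 : (1:ℕ) ≤ 2 ^ ℓ := Nat.one_le_two_pow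
    have h2 : (2:ℕ) ^ (ℓ+1) = 2 * 2 ^ ℓ := by rw [pow_succ]; ring
    have h3 : (2:ℕ) ^ (ℓ+1) - 1 = 2 * (2 ^ ℓ - 1) + 1 := by omega
    rw [h3, s2_double_add_one, ih]

lemma s2_bits (ℓ : ℕ) : ∀ v : ℕ, v < 2 ^ ℓ → s2 v = ∑ i ∈ Finset.range ℓ, v / 2 ^ i % 2 := by
  induction ℓ with
  | zero => intro v hv; interval_cases v; simp [s2_zero]
  | succ ℓ ih =>
    intro v hv
    rcases Nat.eq_zero_or_pos v with h0 | h0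
    · subst h0; simp [s2_zero]
    have hrec : s2 v = v % 2 + s2 (v / 2) := by
      rcases Nat.even_or_odd v with he | ho
      · obtain ⟨m, hm⟩ := he
        have : v = 2 * m := by omega
        subst this
        rw [s2_double m (by omega)]
        simp [Nat.mul_div_cancel_left, Nat.mul_mod_right]
      · obtain ⟨m, hm⟩ := ho
        subst hm
        rw [s2_double_add_one]
        have h1 : (2*m+1) % 2 = 1 := by omega
        have h2 : (2*m+1) / 2 = m := by omega
        rw [h1, h2]; omega
    rw [hrec, Finset.sum_range_succ' (fun i => v / 2 ^ i % 2) ℓ]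
    have hv2 : v / 2 < 2 ^ ℓ := by
      have : (2:ℕ) ^ (ℓ+1) = 2 * 2 ^ ℓ := by rw [pow_succ]; ring
      omega
    have hterm : ∀ i, v / 2 ^ (i+1) % 2 = (v / 2) / 2 ^ i % 2 := by
      intro i
      rw [show (2:ℕ)^(i+1) = 2 * 2^i by rw [pow_succ]; ring, ← Nat.div_div_eq_div_mul]
    have : ∑ i ∈ Finset.range ℓ, v / 2 ^ (i+1) % 2 = ∑ i ∈ Finset.range ℓ, (v/2) / 2 ^ i % 2 := by
      apply Finset.sum_congr rfl; intro i _; exact hterm i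
    rw [this, ← ih (v/2) hv2]
    simp [Nat.pow_zero]
    omega


section Shift
variable {ℓ : ℕ}

lemma shift2_eq (hl : 1 ≤ ℓ) {v : ℕ} (hv : v ≤ 2 ^ ℓ - 1) :
    shift2 ℓ v + (2 ^ ℓ - 1) * ebit ℓ v = 2 * v := by
  have h2 : (2:ℕ) ≤ 2 ^ ℓ := by
    calc (2:ℕ) = 2^1 := by norm_num
    _ ≤ 2 ^ ℓ := Nat.pow_le_pow_right (by norm_num) hl
  unfold shift2 ebit
  by_cases h : v = 2 ^ ℓ - 1
  · subst h; rw [if_pos rfl, if_pos (by omega)]; omega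
  · rw [if_neg h]
    have hvlt : v < 2 ^ ℓ - 1 := by omega
    by_cases h3 : 2 ^ ℓ - 1 ≤ 2 * v
    · rw [if_pos h3]
      have : 2 * v % (2 ^ ℓ - 1) = 2 * v - (2 ^ ℓ - 1) := by
        rw [Nat.mod_eq_sub_mod (by omega), Nat.mod_eq_of_lt (by omega)]
      omega
    · rw [if_neg h3, Nat.mod_eq_of_lt (by omega)]; omega

lemma shift2_le (hl : 1 ≤ ℓ) {v : ℕ} (hv : v ≤ 2 ^ ℓ - 1) : shift2 ℓ v ≤ 2 ^ ℓ - 1 := by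
  unfold shift2
  by_cases h : v = 2 ^ ℓ - 1
  · rw [if_pos h]; omega
  · rw [if_neg h]
    have h2 : (2:ℕ) ≤ 2 ^ ℓ := by
      calc (2:ℕ) = 2^1 := by norm_num
      _ ≤ 2 ^ ℓ := Nat.pow_le_pow_right (by norm_num) hl
    have := Nat.mod_lt (2*v) (show 0 < 2^ℓ - 1 by omega)
    omega

lemma shift2_pos (hl : 1 ≤ ℓ) {v : ℕ} (hv : v ≤ 2 ^ ℓ - 1) (hp : 1 ≤ v) : 1 ≤ shift2 ℓ v := by
  unfold shift2
  by_cases h : v = 2 ^ ℓ - 1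
  · rw [if_pos h]; omega
  · rw [if_neg h]
    have h2 : (2:ℕ) ≤ 2 ^ ℓ := by
      calc (2:ℕ) = 2^1 := by norm_num
      _ ≤ 2 ^ ℓ := Nat.pow_le_pow_right (by norm_num) hl
    rcases Nat.lt_or_ge (2*v) (2^ℓ - 1) with hc | hc
    · rw [Nat.mod_eq_of_lt hc]; omega
    · have : 2 * v % (2 ^ ℓ - 1) = 2 * v - (2 ^ ℓ - 1) := by
        rw [Nat.mod_eq_sub_mod (by omega), Nat.mod_eq_of_lt (by omega)]
      have hodd : (2 ^ ℓ - 1) % 2 = 1 := by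
        have h0 : (2:ℕ) ^ ℓ % 2 = 0 := by
          rcases Nat.exists_eq_add_of_le hl with ⟨k, hk⟩
          subst hk
          rw [pow_add]
          simp [Nat.mul_mod_left, pow_one]
        omega
      omega

lemma iter_le (hl : 1 ≤ ℓ) {v : ℕ} (hv : v ≤ 2 ^ ℓ - 1) (k : ℕ) :
    (shift2 ℓ)^[k] v ≤ 2 ^ ℓ - 1 := by
  induction k with
  | zero => simpa
  | succ k ih => rw [Function.iterate_succ_apply']; exact shift2_le hl ih

lemma iter_pos (hl : 1 ≤ ℓ) {v : ℕ} (hv : v ≤ 2 ^ ℓ - 1) (hp : 1 ≤ v) (k : ℕ) :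
    1 ≤ (shift2 ℓ)^[k] v := by
  induction k with
  | zero => simpa
  | succ k ih =>
    rw [Function.iterate_succ_apply']
    exact shift2_pos hl (iter_le hl hv k) ih

lemma iter_mod (hl : 1 ≤ ℓ) {v : ℕ} (hv : v < 2 ^ ℓ - 1) (k : ℕ) :
    (shift2 ℓ)^[k] v = 2 ^ k * v % (2 ^ ℓ - 1) := by
  induction k with
  | zero => simp [Nat.mod_eq_of_lt (by omega : v < 2 ^ ℓ - 1)]
  | succ k ih =>
    rw [Function.iterate_succ_apply', ih]
    have hEpos : 0 < 2 ^ ℓ - 1 := by omega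
    have hlt : 2 ^ k * v % (2 ^ ℓ - 1) < 2 ^ ℓ - 1 := Nat.mod_lt _ hEpos
    unfold shift2
    rw [if_neg (by omega)]
    rw [show (2:ℕ)^(k+1) * v = 2 * (2^k * v) by rw [pow_succ]; ring]
    conv_lhs => rw [Nat.mul_mod, Nat.mod_mod]
    rw [← Nat.mul_mod]

lemma iter_period (hl : 1 ≤ ℓ) {v : ℕ} (hv : v ≤ 2 ^ ℓ - 1) :
    (shift2 ℓ)^[ℓ] v = v := by
  rcases eq_or_lt_of_le hv with he | hlt
  · rw [he]; exact Function.iterate_fixed (by unfold shift2; rw [if_pos rfl]) ℓ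
  · rw [iter_mod hl hlt]
    have h1 : (1:ℕ) ≤ 2 ^ ℓ := Nat.one_le_two_pow
    have heq : 2 ^ ℓ * v = v * (2 ^ ℓ - 1) + v := by
      cases Nat.exists_eq_add_of_le h1 with
      | intro c hc =>
        rw [hc]
        have : 1 + c - 1 = c := by omega
        rw [this]; ring
    rw [heq]
    simp [Nat.add_mod, Nat.mul_mod_left]
    exact Nat.mod_eq_of_lt hlt
lemma ebit_iter (hl : 1 ≤ ℓ) {v k : ℕ} (hv : v < 2 ^ ℓ - 1) (hk : k < ℓ) :
    ebit ℓ ((shift2 ℓ)^[k] v) = v / 2 ^ (ℓ - 1 - k) % 2 := by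
  rw [iter_mod hl hv]
  set K := ℓ - k with hK
  have hK1 : 1 ≤ K := by omega
  have hKk : K + k = ℓ := by omega
  set X := 2 ^ K with hX
  set Y := 2 ^ k with hY
  have hXY : X * Y = 2 ^ ℓ := by rw [hX, hY, ← pow_add, hKk]
  have hXpos : 0 < X := Nat.two_pow_pos _
  have hYpos : 0 < Y := Nat.two_pow_pos _
  set q := v / X with hq
  set r := v % X with hr
  have hvqr : X * q + r = v := Nat.div_add_mod v X
  have hrX : r < X := Nat.mod_lt _ hXpos
  have hqY : q < Y := by
    rw [hq, Nat.div_lt_iff_lt_mul hXpos]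
    calc v < 2 ^ ℓ - 1 := hv
    _ ≤ Y * X := by rw [mul_comm]; omega
  set E := 2 ^ ℓ - 1 with hEdef
  have hE1 : (1:ℕ) ≤ 2 ^ ℓ := Nat.one_le_two_pow
  have hXY' : X * Y = E + 1 := by omega
  have hkey : Y * v = q * E + (q + Y * r) := by
    have h1 : Y * v = X * Y * q + Y * r := by rw [← hvqr]; ring
    rw [h1, hXY']; ring
  have hYrle : Y * r + Y ≤ E + 1 := by
    have h5 : Y * (r + 1) ≤ Y * X := Nat.mul_le_mul_left Y (by omega)
    rw [mul_add] at h5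
    rw [mul_comm X Y] at hXY'
    omega
  have hle : q + Y * r ≤ E := by omega
  have hlt2 : q + Y * r < E := by
    rcases eq_or_lt_of_le hle with he | h
    swap; · exact h
    exfalso
    have h6 : Y * (X - 1) + Y = Y * X := by
      have hx1 : (X - 1) + 1 = X := by omega
      calc Y * (X - 1) + Y = Y * ((X - 1) + 1) := by ring
      _ = Y * X := by rw [hx1]
    have hYX : Y * X = E + 1 := by rw [mul_comm]; exact hXY'
    have h5 : Y * (X - 1) ≤ Y * r := by omega
    have h7 : X - 1 ≤ r := Nat.le_of_mul_le_mul_left h5 hYpos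
    have hre : r = X - 1 := by omega
    have hqe : q = Y - 1 := by
      have : Y * r + Y = Y * X := by rw [hre]; omega
      omega
    have hve : v = E := by
      have e1 : X * (Y - 1) + X = X * Y := by
        have hy1 : (Y - 1) + 1 = Y := by omega
        calc X * (Y - 1) + X = X * ((Y - 1) + 1) := by ring
        _ = X * Y := by rw [hy1]
      rw [← hvqr, hre, hqe]
      omega
    omega
  have hmod : Y * v % E = q + Y * r := by
    rw [hkey, Nat.add_mod, Nat.mul_mod_left]
    simp
    exact Nat.mod_eq_of_lt hlt2
  rw [hmod]
  -- now compare with the bit of v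
  set Z := 2 ^ (K - 1) with hZ
  have hZpos : 0 < Z := Nat.two_pow_pos _
  have hXZ : X = 2 * Z := by
    rw [hX, hZ, ← pow_succ']
    congr 1
    omega
  have hYZ : Y * Z = 2 ^ (ℓ - 1) := by
    rw [hY, hZ, ← pow_add]
    congr 1
    omega
  have h2l : (2:ℕ) ^ ℓ = 2 * 2 ^ (ℓ - 1) := by
    rw [← pow_succ']
    congr 1
    omega
  have hlk : ℓ - 1 - k = K - 1 := by omega
  rw [hlk, ← hZ]
  have hdiv : v / Z = r / Z + 2 * q := by
    rw [← hvqr, hXZ]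
    have : 2 * Z * q + r = r + Z * (2 * q) := by ring
    rw [this]
    exact Nat.add_mul_div_left r (2*q) hZpos
  have hrZ2 : r / Z < 2 := by rw [Nat.div_lt_iff_lt_mul hZpos]; omega
  have hmod2 : v / Z % 2 = r / Z := by
    rw [hdiv, Nat.add_mul_mod_self_left, Nat.mod_eq_of_lt hrZ2]
  rw [hmod2]
  by_cases hZr : Z ≤ r
  · have hd1 : 1 ≤ r / Z := (Nat.one_le_div_iff hZpos).2 hZr
    have hbig : E ≤ 2 * (q + Y * r) := by
      have h8 : Y * Z ≤ Y * r := Nat.mul_le_mul_left Y hZr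
      rw [hYZ] at h8
      omega
    unfold ebit
    rw [← hEdef, if_pos hbig]
    omega
  · have hd0 : r / Z = 0 := Nat.div_eq_of_lt (by omega)
    have hsmall : ¬ (E ≤ 2 * (q + Y * r)) := by
      have h8 : Y * (r + 1) ≤ Y * Z := Nat.mul_le_mul_left Y (by omega)
      rw [mul_add, hYZ] at h8
      omega
    unfold ebit
    rw [← hEdef, if_neg hsmall]
    omega
lemma sum_ebit (hl : 1 ≤ ℓ) {v : ℕ} (hv : v ≤ 2 ^ ℓ - 1) :
    ∑ k ∈ Finset.range ℓ, ebit ℓ ((shift2 ℓ)^[k] v) = s2 v := by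
  rcases eq_or_lt_of_le hv with he | hlt
  · have hfix : ∀ k, (shift2 ℓ)^[k] v = v := by
      intro k
      exact Function.iterate_fixed (by rw [he]; unfold shift2; rw [if_pos rfl]) k
    have hone : ebit ℓ v = 1 := by
      unfold ebit
      rw [if_pos (by omega)]
    calc ∑ k ∈ Finset.range ℓ, ebit ℓ ((shift2 ℓ)^[k] v)
        = ∑ _k ∈ Finset.range ℓ, 1 := by
          apply Finset.sum_congr rfl
          intro k _
          rw [hfix k, hone]
      _ = ℓ := by simp
      _ = s2 v := by rw [he, s2_pow_sub_one]
  · have h1 : ∑ k ∈ Finset.range ℓ, ebit ℓ ((shift2 ℓ)^[k] v)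
        = ∑ k ∈ Finset.range ℓ, v / 2 ^ (ℓ - 1 - k) % 2 := by
      apply Finset.sum_congr rfl
      intro k hk
      exact ebit_iter hl hlt (Finset.mem_range.1 hk)
    rw [h1, Finset.sum_range_reflect (fun i => v / 2 ^ i % 2) ℓ]
    exact (s2_bits ℓ v (by omega)).symm
/-! ### The potential function -/

def BB (M m : ℕ) : ℕ := (M + 1) * 2 ^ (2*m + 2)

def PP (M m x : ℕ) : ℕ := Nat.log 2 (BB M m / x)

open Classical in
noncomputable def ee (M m x : ℕ) : ℕ :=
  if ∃ j, x = 2 ^ j then 0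
  else if x * 2 ^ (PP M m x + 1) = (M + 3) * 2 ^ (2*m + 2) ∧ ¬ ∃ j, x = 3 * 2 ^ j then 2
  else 1

noncomputable def eta (M m x : ℕ) : ℕ := 2 * PP M m x + ee M m x

lemma ee_le_two (M m x : ℕ) : ee M m x ≤ 2 := by
  unfold ee; split
  · omega
  · split <;> omega

lemma ee_one (M m : ℕ) : ee M m 1 = 0 := by
  unfold ee
  rw [if_pos ⟨0, rfl⟩]

lemma ee_three (M m : ℕ) : ee M m 3 = 1 := by
  unfold ee
  rw [if_neg, if_neg]
  · rintro ⟨heq, hne⟩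
    exact hne ⟨0, by norm_num⟩
  · rintro ⟨j, hj⟩
    rcases j with _ | _ | j
    · norm_num at hj
    · norm_num at hj
    · have : 4 ≤ 2 ^ (j + 2) := by
        calc (4:ℕ) = 2 ^ 2 := by norm_num
        _ ≤ 2 ^ (j + 2) := Nat.pow_le_pow_right (by norm_num) (by omega)
      omega

lemma ee_ge_one (M m x : ℕ) (h : ¬ ∃ j, x = 2 ^ j) : 1 ≤ ee M m x := by
  unfold ee; rw [if_neg h]; split <;> omega

lemma ee_eq_two (M m x : ℕ) (h1 : ¬ ∃ j, x = 2 ^ j)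
    (h2 : x * 2 ^ (PP M m x + 1) = (M + 3) * 2 ^ (2*m + 2)) (h3 : ¬ ∃ j, x = 3 * 2 ^ j) :
    ee M m x = 2 := by
  unfold ee; rw [if_neg h1, if_pos ⟨h2, h3⟩]

lemma ee_eq_one (M m x : ℕ) (h1 : ¬ ∃ j, x = 2 ^ j)
    (h2 : ¬ (x * 2 ^ (PP M m x + 1) = (M + 3) * 2 ^ (2*m + 2) ∧ ¬ ∃ j, x = 3 * 2 ^ j)) :
    ee M m x = 1 := by
  unfold ee; rw [if_neg h1, if_neg h2]

section PLemmas
variable {M m : ℕ}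

lemma Ple {x p : ℕ} (hx : 0 < x) (hxB : x ≤ BB M m) :
    x * 2 ^ p ≤ BB M m ↔ p ≤ PP M m x := by
  unfold PP
  rw [Nat.le_log_iff_pow_le (by norm_num) (by
    have := Nat.div_pos hxB hx
    omega)]
  rw [Nat.le_div_iff_mul_le hx, mul_comm]

lemma PxB {x : ℕ} (hx : 0 < x) (hxB : x ≤ BB M m) : x * 2 ^ (PP M m x) ≤ BB M m :=
  (Ple hx hxB).2 le_rfl

lemma PltB {x : ℕ} (hx : 0 < x) (hxB : x ≤ BB M m) : BB M m < x * 2 ^ (PP M m x + 1) := by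
  by_contra h
  push_neg at h
  have h2 : PP M m x + 1 ≤ PP M m x := (Ple hx hxB).1 h
  omega

lemma Panti {x y : ℕ} (hx : 0 < x) (hxy : x ≤ y) (hyB : y ≤ BB M m) :
    PP M m y ≤ PP M m x := by
  apply (Ple hx (le_trans hxy hyB)).1
  calc x * 2 ^ (PP M m y) ≤ y * 2 ^ (PP M m y) := Nat.mul_le_mul_right _ hxy
  _ ≤ BB M m := PxB (by omega) hyB

lemma Pdouble {x : ℕ} (hx : 0 < x) (h2x : 2 * x ≤ BB M m) :
    PP M m (2 * x) + 1 = PP M m x := by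
  have hxB : x ≤ BB M m := by omega
  have h1 : PP M m (2*x) + 1 ≤ PP M m x := by
    apply (Ple hx hxB).1
    have := PxB (show 0 < 2*x by omega) h2x
    calc x * 2 ^ (PP M m (2*x) + 1) = (2*x) * 2 ^ (PP M m (2*x)) := by ring
    _ ≤ BB M m := this
  have hP1 : 1 ≤ PP M m x := by
    apply (Ple hx hxB).1
    rw [pow_one, mul_comm]
    exact h2x
  have h2 : PP M m x - 1 ≤ PP M m (2*x) := by
    apply (Ple (show 0 < 2*x by omega) h2x).1
    have hs : PP M m x = (PP M m x - 1) + 1 := by omega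
    have heq : (2*x) * 2 ^ (PP M m x - 1) = x * 2 ^ (PP M m x) := by
      conv_rhs => rw [hs]
      ring
    rw [heq]
    exact PxB hx hxB
  omega

lemma ee_double {x : ℕ} (hx : 0 < x) (h2x : 2 * x ≤ BB M m) :
    ee M m (2 * x) = ee M m x := by
  have hiff1 : (∃ j, 2*x = 2 ^ j) ↔ (∃ j, x = 2 ^ j) := by
    constructor
    · rintro ⟨j, hj⟩
      rcases j with _ | j
      · rw [pow_zero] at hj; omega
      · exact ⟨j, by rw [pow_succ] at hj; omega⟩
    · rintro ⟨j, hj⟩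
      exact ⟨j + 1, by rw [pow_succ]; omega⟩
  have hiff3 : (∃ j, 2*x = 3 * 2 ^ j) ↔ (∃ j, x = 3 * 2 ^ j) := by
    constructor
    · rintro ⟨j, hj⟩
      rcases j with _ | j
      · rw [pow_zero] at hj; omega
      · exact ⟨j, by rw [pow_succ] at hj; omega⟩
    · rintro ⟨j, hj⟩
      exact ⟨j + 1, by rw [pow_succ]; omega⟩
  have heq : (2*x) * 2 ^ (PP M m (2*x) + 1) = x * 2 ^ (PP M m x + 1) := by
    have hP := Pdouble hx h2x
    rw [← hP]
    ring
  unfold ee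
  rw [heq]
  by_cases h1 : ∃ j, x = 2 ^ j
  · rw [if_pos (hiff1.2 h1), if_pos h1]
  · rw [if_neg (fun hc => h1 (hiff1.1 hc)), if_neg h1]
    by_cases h3 : x * 2 ^ (PP M m x + 1) = (M + 3) * 2 ^ (2*m + 2) ∧ ¬ ∃ j, x = 3 * 2 ^ j
    · rw [if_pos ⟨h3.1, fun hc => h3.2 (hiff3.1 hc)⟩, if_pos h3]
    · rw [if_neg, if_neg h3]
      rintro ⟨ha, hb⟩
      exact h3 ⟨ha, fun hc => hb (hiff3.2 hc)⟩

lemma BBdef (M m : ℕ) : BB M m = (M+1) * 2 ^ (2*m+2) := rfl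

lemma step {M m : ℕ} (hm : 15 ≤ m) (hM1 : 3 * 2 ^ m ≤ M + 1) (hM2 : M + 9 ≤ 2 ^ (m+2))
    (hModd : M % 2 = 1)
    (φ φ' cc ww : ℕ) (hφ : 1 ≤ φ) (hφ' : 1 ≤ φ')
    (hφB : φ ≤ (M+1) * 2 ^ (m+1)) (hφ'B : φ' ≤ (M+1) * 2 ^ (m+1))
    (hrec : 2 * φ = φ' + cc)
    (hcase : (ww = 0 ∧ cc = 0) ∨
             (ww = 1 ∧ cc % 2 = 1 ∧ cc ≤ M ∧ cc ≠ 2 ^ (m+1) - 1) ∨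
             (2 ≤ ww ∧ cc ≤ ww * M)) :
    2 + eta M m φ' ≤ (2*m+1) * ww + eta M m φ := by
  have hp2 : (2:ℕ)^(m+2) = 4 * 2^m := by rw [pow_add]; ring
  have hp1 : (2:ℕ)^(m+1) = 2 * 2^m := by rw [pow_add]; ring
  have hpm : (16:ℕ) ≤ 2^m := by
    calc (16:ℕ) = 2^4 := by norm_num
    _ ≤ 2^m := Nat.pow_le_pow_right (by norm_num) (by omega)
  have hT : (0:ℕ) < 2^(2*m+2) := by positivity
  have hBge : M+1 ≤ BB M m := by
    rw [BBdef]
    exact Nat.le_mul_of_pos_right _ hT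
  have hmono : (M+1) * 2^(m+1) ≤ BB M m := by
    rw [BBdef]
    exact Nat.mul_le_mul_left _ (Nat.pow_le_pow_right (by norm_num) (by omega))
  have hφBB : φ ≤ BB M m := le_trans hφB hmono
  have hφ'BB : φ' ≤ BB M m := le_trans hφ'B hmono
  have hP_of_le : ∀ y : ℕ, 0 < y → y ≤ M+1 → y ≤ BB M m → 2*m+2 ≤ PP M m y := by
    intro y hy h hyB
    apply (Ple hy hyB).1
    rw [BBdef]
    exact Nat.mul_le_mul_right _ h
  have hP_of_le2 : ∀ y : ℕ, 0 < y → 2*y ≤ M+1 → y ≤ BB M m → 2*m+3 ≤ PP M m y := by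
    intro y hy h hyB
    apply (Ple hy hyB).1
    rw [BBdef]
    calc y * 2^(2*m+3) = (2*y) * 2^(2*m+2) := by
          rw [show 2*m+3 = (2*m+2)+1 by omega, pow_succ]; ring
    _ ≤ (M+1) * 2^(2*m+2) := Nat.mul_le_mul_right _ h
  have hP_of_le4 : ∀ y : ℕ, 0 < y → 4*y ≤ M+1 → y ≤ BB M m → 2*m+4 ≤ PP M m y := by
    intro y hy h hyB
    apply (Ple hy hyB).1
    rw [BBdef]
    calc y * 2^(2*m+4) = (4*y) * 2^(2*m+2) := by
          rw [show 2*m+4 = (2*m+2)+2 by omega, pow_add]; norm_num; ring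
    _ ≤ (M+1) * 2^(2*m+2) := Nat.mul_le_mul_right _ h
  have hP1 : PP M m 1 = 3*m+3 := by
    have hle : 3*m+3 ≤ PP M m 1 := by
      apply (Ple (by norm_num) (by omega)).1
      rw [BBdef, one_mul, show 3*m+3 = (m+1)+(2*m+2) by omega, pow_add]
      exact Nat.mul_le_mul_right _ (by omega)
    have hge : ¬ (3*m+4 ≤ PP M m 1) := by
      intro hc
      have h1 := (Ple (show (0:ℕ) < 1 by norm_num) (by omega)).2 hc
      rw [BBdef, one_mul, show 3*m+4 = (m+2)+(2*m+2) by omega, pow_add] at h1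
      have h2 := Nat.le_of_mul_le_mul_right h1 hT
      omega
    omega
  have hP3 : PP M m 3 = 3*m+2 := by
    have h3B : (3:ℕ) ≤ BB M m := by omega
    have hle : 3*m+2 ≤ PP M m 3 := by
      apply (Ple (by norm_num) h3B).1
      rw [BBdef]
      calc 3 * 2^(3*m+2) = (3*2^m) * 2^(2*m+2) := by
            rw [mul_assoc, ← pow_add]; congr 2; omega
      _ ≤ (M+1) * 2^(2*m+2) := Nat.mul_le_mul_right _ hM1
    have hge : ¬ (3*m+3 ≤ PP M m 3) := by
      intro hc
      have h1 := (Ple (show (0:ℕ) < 3 by norm_num) h3B).2 hc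
      rw [BBdef] at h1
      have h2 : (3*2^(m+1)) * 2^(2*m+2) ≤ (M+1) * 2^(2*m+2) := by
        calc (3*2^(m+1)) * 2^(2*m+2) = 3 * 2^(3*m+3) := by
              rw [mul_assoc, ← pow_add]; congr 2; omega
        _ ≤ (M+1) * 2^(2*m+2) := h1
      have h3 := Nat.le_of_mul_le_mul_right h2 hT
      rw [hp1] at h3
      omega
    omega
  have hP5 : ∀ y : ℕ, 5 ≤ y → y ≤ BB M m → PP M m y ≤ 3*m+1 := by
    intro y h5 hyB
    by_contra hc
    push_neg at hc
    have h1 := (Ple (by omega) hyB).2 (show 3*m+2 ≤ PP M m y by omega)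
    rw [BBdef] at h1
    have h4 : (5*2^m) * 2^(2*m+2) ≤ (M+1) * 2^(2*m+2) := by
      calc (5*2^m) * 2^(2*m+2) = 5 * 2^(3*m+2) := by
            rw [mul_assoc, ← pow_add]; congr 2; omega
      _ ≤ y * 2^(3*m+2) := Nat.mul_le_mul_right _ h5
      _ ≤ (M+1) * 2^(2*m+2) := h1
    have h6 := Nat.le_of_mul_le_mul_right h4 hT
    omega
  have heta1 : eta M m 1 = 2*(3*m+3) := by unfold eta; rw [hP1, ee_one]; omega
  have heta3 : eta M m 3 = 2*(3*m+2) + 1 := by unfold eta; rw [hP3, ee_three]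
  have heeφ : ee M m φ ≤ 2 := ee_le_two M m φ
  have heeφ' : ee M m φ' ≤ 2 := ee_le_two M m φ'
  rcases hcase with ⟨hw0, hc0⟩ | ⟨hw1, hcodd, hcM, hcne⟩ | ⟨hw2, hcM⟩
  · -- w = 0
    subst hw0
    have hφ'2 : φ' = 2 * φ := by omega
    subst hφ'2
    have hPd := Pdouble (M := M) (m := m) hφ hφ'BB
    have hed := ee_double (M := M) (m := m) hφ hφ'BB
    unfold eta
    rw [hed]
    omega
  · -- w = 1
    subst hw1
    have hφ'odd : φ' % 2 = 1 := by omega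
    rcases show φ' = 1 ∨ φ' = 3 ∨ 5 ≤ φ' by omega with h1 | h3 | h5
    · -- φ' = 1
      subst h1
      have h2φ : 2*φ ≤ M+1 := by omega
      rcases Nat.lt_or_ge (4*φ) (M+2) with h4 | h4
      · have := hP_of_le4 φ hφ (by omega) hφBB
        rw [heta1]
        unfold eta
        omega
      · have hPb := hP_of_le2 φ hφ h2φ hφBB
        have hee1 : 1 ≤ ee M m φ := by
          apply ee_ge_one
          rintro ⟨j, hj⟩
          subst hj
          have e : (2:ℕ)^(j+1) = 2*2^j := by rw [pow_add]; ring
          have hj1 : 2^(j+1) < 2^(m+2) := by rw [e]; omega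
          have hjle : j+1 < m+2 := (Nat.pow_lt_pow_iff_right (by norm_num)).1 hj1
          have hj2 : (2:ℕ)^(m+1) < 2^(j+2) := by
            have e2 : (2:ℕ)^(j+2) = 4 * 2^j := by rw [pow_add]; ring
            rw [hp1, e2]
            omega
          have hjge : m+1 < j+2 := (Nat.pow_lt_pow_iff_right (by norm_num)).1 hj2
          have hjm : j = m := by omega
          subst hjm
          apply hcne
          omega
        rw [heta1]
        unfold eta
        omega
    · -- φ' = 3
      subst h3
      have h2φ : 2*φ ≤ M+3 := by omega
      rcases Nat.lt_or_ge (2*φ) (M+2) with h2 | h2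
      · have := hP_of_le2 φ hφ (by omega) hφBB
        rw [heta3]
        unfold eta
        omega
      · -- 2φ = M+3
        have h2φe : 2*φ = M+3 := by omega
        have hPφ : PP M m φ = 2*m+2 := by
          have hle := hP_of_le φ hφ (by omega) hφBB
          have hge : ¬ (2*m+3 ≤ PP M m φ) := by
            intro hcon
            have h1 := (Ple hφ hφBB).2 hcon
            rw [BBdef] at h1
            have h6 : (2*φ) * 2^(2*m+2) ≤ (M+1) * 2^(2*m+2) := by
              calc (2*φ) * 2^(2*m+2) = φ * 2^(2*m+3) := by
                    rw [show 2*m+3 = (2*m+2)+1 by omega, pow_succ]; ring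
              _ ≤ (M+1) * 2^(2*m+2) := h1
            have h7 := Nat.le_of_mul_le_mul_right h6 hT
            omega
          omega
        have heeφ2 : ee M m φ = 2 := by
          apply ee_eq_two
          · rintro ⟨j, hj⟩
            subst hj
            have e : (2:ℕ)^(j+1) = 2*2^j := by rw [pow_add]; ring
            have h1 : (2:ℕ)^(m+1) < 2^(j+1) := by rw [hp1, e]; omega
            have h2' : m+1 < j+1 := (Nat.pow_lt_pow_iff_right (by norm_num)).1 h1
            have h3' : (2:ℕ)^(m+2) ≤ 2^(j+1) := Nat.pow_le_pow_right (by norm_num) (by omega)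
            rw [e] at h3'
            omega
          · rw [hPφ, show (2*m+2)+1 = (2*m+2)+1 from rfl, pow_succ]
            calc φ * (2^(2*m+2) * 2) = (2*φ) * 2^(2*m+2) := by ring
            _ = (M+3) * 2^(2*m+2) := by rw [h2φe]
          · rintro ⟨j, hj⟩
            subst hj
            have h1 : (2:ℕ)^m < 2^(j+1) := by
              have e : (2:ℕ)^(j+1) = 2*2^j := by rw [pow_add]; ring
              rw [e]
              omega
            have h2' : m < j+1 := (Nat.pow_lt_pow_iff_right (by norm_num)).1 h1
            have h3' : (2:ℕ)^m ≤ 2^j := Nat.pow_le_pow_right (by norm_num) (by omega)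
            omega
        rw [heta3]
        unfold eta
        rw [hPφ, heeφ2]
        omega
    · -- φ' ≥ 5
      have hP'le : PP M m φ' ≤ 3*m+1 := hP5 φ' h5 hφ'BB
      have hnp2 : ¬ ∃ j, φ' = 2^j := by
        rintro ⟨j, hj⟩
        rcases j with _ | j
        · rw [pow_zero] at hj; omega
        · rw [pow_succ] at hj; omega
      by_cases hbump : φ' * 2 ^ (PP M m φ' + 1) = (M + 3) * 2 ^ (2*m + 2) ∧ ¬ ∃ j, φ' = 3 * 2 ^ j
      · have hee2 : ee M m φ' = 2 := ee_eq_two M m φ' hnp2 hbump.1 hbump.2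
        have hP'le2 : PP M m φ' ≤ 3*m := by
          by_contra hcon
          push_neg at hcon
          have h10 : 3*m+2 ≤ PP M m φ' + 1 := by omega
          have h11 : (2:ℕ)^(3*m+2) ≤ 2^(PP M m φ' + 1) := Nat.pow_le_pow_right (by norm_num) h10
          have h12 : (5 * 2^m) * 2^(2*m+2) ≤ (M+3) * 2^(2*m+2) := by
            calc (5 * 2^m) * 2^(2*m+2) = 5 * 2^(3*m+2) := by
                  rw [mul_assoc, ← pow_add]; congr 2; omega
            _ ≤ 5 * 2^(PP M m φ' + 1) := by omega
            _ ≤ φ' * 2^(PP M m φ' + 1) := Nat.mul_le_mul_right _ h5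
            _ = (M+3) * 2^(2*m+2) := hbump.1
          have h14 := Nat.le_of_mul_le_mul_right h12 hT
          omega
        rcases Nat.lt_or_ge φ (M+2) with hsml | hbig
        · have := hP_of_le φ hφ (by omega) hφBB
          unfold eta
          rw [hee2]
          omega
        · have hφ'ge : φ ≤ φ' := by omega
          have hPle := Panti hφ hφ'ge hφ'BB
          unfold eta
          rw [hee2]
          omega
      · have hee1 : ee M m φ' = 1 := ee_eq_one M m φ' hnp2 hbump
        rcases Nat.lt_or_ge φ (M+2) with hsml | hbig
        · have := hP_of_le φ hφ (by omega) hφBB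
          unfold eta
          rw [hee1]
          omega
        · have hφ'ge : φ ≤ φ' := by omega
          have hPle := Panti hφ hφ'ge hφ'BB
          unfold eta
          rw [hee1]
          omega
  · -- w ≥ 2
    have hww : ww ≤ 2^(ww-1) := by
      have h2 : ww - 1 < 2^(ww-1) := Nat.lt_two_pow_self
      omega
    have hkey : φ ≤ φ' * 2^(ww+m) := by
      have h1 : 1 + ww * M ≤ ww * (M+1) := by
        have e : ww*(M+1) = ww*M + ww := by ring
        omega
      have h2 : ww * (M+1) ≤ 2^(ww-1) * 2^(m+2) := Nat.mul_le_mul hww (by omega)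
      have h3 : (2:ℕ)^(ww-1) * 2^(m+2) = 2^(ww+m+1) := by
        rw [← pow_add]; congr 1; omega
      have h4 : 2*φ ≤ φ' * (1 + ww*M) := by
        have e : φ' * (1 + ww*M) = φ' + φ' * (ww*M) := by ring
        have e2 : ww*M ≤ φ' * (ww*M) := Nat.le_mul_of_pos_left _ hφ'
        omega
      have h5 : φ' * (1 + ww*M) ≤ φ' * 2^(ww+m+1) := by
        apply Nat.mul_le_mul_left
        omega
      have h6 : (2:ℕ)^(ww+m+1) = 2 * 2^(ww+m) := by rw [pow_add, pow_add]; ring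
      have h7 : φ' * 2^(ww+m+1) = 2 * (φ' * 2^(ww+m)) := by rw [h6]; ring
      omega
    have hPkey : PP M m φ' ≤ PP M m φ + (ww+m) := by
      rcases Nat.lt_or_ge (PP M m φ') (ww+m+1) with hsm | hbg
      · omega
      · have hs : ww+m + (PP M m φ' - (ww+m)) = PP M m φ' := by omega
        have h7 : φ * 2^(PP M m φ' - (ww+m)) ≤ BB M m := by
          calc φ * 2^(PP M m φ' - (ww+m)) ≤ (φ' * 2^(ww+m)) * 2^(PP M m φ' - (ww+m)) :=
                Nat.mul_le_mul_right _ hkey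
          _ = φ' * 2^(PP M m φ') := by rw [mul_assoc, ← pow_add, hs]
          _ ≤ BB M m := PxB (by omega) hφ'BB
        have h8 := (Ple hφ hφBB).1 h7
        omega
    have hfin : 2*ww + 2*m + 6 ≤ (2*m+1) * ww := by
      have e1 : (2*m+1)*ww = (2*m+1)*2 + (2*m+1)*(ww-2) := by
        rw [← Nat.mul_add]
        congr 1
        omega
      have e2 : 2*(ww-2) ≤ (2*m+1)*(ww-2) := Nat.mul_le_mul_right _ (by omega)
      omega
    unfold eta
    omega
lemma lower_abstract {m M ℓ : ℕ} (hm : 15 ≤ m) (hM1 : 3 * 2 ^ m ≤ M + 1)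
    (hM2 : M + 9 ≤ 2 ^ (m+2)) (hModd : M % 2 = 1)
    (D : Finset ℕ) (hsub : ∀ x ∈ D, x % 2 = 1 ∧ x ≤ M ∧ x ≠ 2 ^ (m+1) - 1)
    (hsumD : ∑ x ∈ D, x ≤ (M+1) * 2 ^ (m+1))
    (U : ℕ → ℕ) (hsol : IsSolution D ℓ U) :
    2 * ℓ ≤ (2*m+1) * weight D U := by
  have hl : 1 ≤ ℓ := hsol.len_pos
  set E := 2 ^ ℓ - 1 with hE
  have hE2 : (2:ℕ) ≤ 2 ^ ℓ := by
    calc (2:ℕ) = 2^1 := by norm_num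
    _ ≤ 2 ^ ℓ := Nat.pow_le_pow_right (by norm_num) hl
  have hEpos : 0 < E := by omega
  set v : ℕ → ℕ → ℕ := fun k d => (shift2 ℓ)^[k] (U d) with hv
  have hvle : ∀ k d, v k d ≤ E := fun k d => iter_le hl (hsol.bounded d) k
  set Φ : ℕ → ℕ := fun k => ∑ d ∈ D, d * v k d with hΦ
  set c : ℕ → ℕ := fun k => ∑ d ∈ D, d * ebit ℓ (v k d) with hc
  set w : ℕ → ℕ := fun k => ∑ d ∈ D, ebit ℓ (v k d) with hw
  have hΦ0 : Φ 0 = ∑ d ∈ D, d * U d := by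
    apply Finset.sum_congr rfl
    intro d _
    simp [hv]
  have hstepΦ : ∀ k, Φ (k+1) + E * c k = 2 * Φ k := by
    intro k
    rw [hΦ, hc]
    simp only
    rw [Finset.mul_sum, Finset.mul_sum, ← Finset.sum_add_distrib]
    apply Finset.sum_congr rfl
    intro d _
    have hv1 : v (k+1) d = shift2 ℓ (v k d) := by
      simp [hv, Function.iterate_succ_apply']
    rw [hv1]
    have := shift2_eq hl (hvle k d)
    calc d * shift2 ℓ (v k d) + E * (d * ebit ℓ (v k d))
        = d * (shift2 ℓ (v k d) + E * ebit ℓ (v k d)) := by ring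
    _ = d * (2 * v k d) := by rw [this]
    _ = 2 * (d * v k d) := by ring
  have hdvd : ∀ k, E ∣ Φ k := by
    intro k
    induction k with
    | zero => rw [hΦ0]; exact hsol.dvd
    | succ k ih =>
      have h1 := hstepΦ k
      have h2 : Φ (k+1) = 2 * Φ k - E * c k := by omega
      rw [h2]
      exact Nat.dvd_sub (Dvd.dvd.mul_left ih 2) (Dvd.intro _ rfl)
  have hpos : ∀ k, 0 < Φ k := by
    intro k
    obtain ⟨d₀, hd₀D, hd₀⟩ := Finset.exists_ne_zero_of_sum_ne_zero (by have := hsol.pos; omega : ∑ d ∈ D, d * U d ≠ 0)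
    have hd₀pos : 0 < d₀ := by
      have := (hsub d₀ hd₀D).1
      omega
    have hU₀ : 0 < U d₀ := by
      by_contra h
      push_neg at h
      interval_cases (U d₀)
      · simp at hd₀
    have hvpos : 0 < v k d₀ := iter_pos hl (hsol.bounded d₀) hU₀ k
    have : 0 < d₀ * v k d₀ := Nat.mul_pos hd₀pos hvpos
    calc 0 < d₀ * v k d₀ := this
    _ ≤ Φ k := Finset.single_le_sum (f := fun d => d * v k d) (fun i _ => Nat.zero_le _) hd₀D
  set φ : ℕ → ℕ := fun k => Φ k / E with hφdef
  have hφmul : ∀ k, E * φ k = Φ k := fun k => Nat.mul_div_cancel' (hdvd k)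
  have hφpos : ∀ k, 1 ≤ φ k := by
    intro k
    have h1 : E ≤ Φ k := Nat.le_of_dvd (hpos k) (hdvd k)
    have := hφmul k
    rcases Nat.eq_zero_or_pos (φ k) with h | h
    · rw [h] at this; omega
    · exact h
  have hφrec : ∀ k, 2 * φ k = φ (k+1) + c k := by
    intro k
    have h1 : E * (2 * φ k) = E * (φ (k+1) + c k) := by
      have e1 := hφmul k
      have e2 := hφmul (k+1)
      have e3 := hstepΦ k
      calc E * (2 * φ k) = 2 * (E * φ k) := by ring
      _ = 2 * Φ k := by rw [e1]
      _ = Φ (k+1) + E * c k := (e3).symm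
      _ = E * φ (k+1) + E * c k := by rw [e2]
      _ = E * (φ (k+1) + c k) := by ring
    exact Nat.eq_of_mul_eq_mul_left hEpos h1
  have hφB : ∀ k, φ k ≤ (M+1) * 2 ^ (m+1) := by
    intro k
    have h1 : Φ k ≤ E * ((M+1) * 2 ^ (m+1)) := by
      calc Φ k ≤ ∑ d ∈ D, d * E := by
            apply Finset.sum_le_sum
            intro d _
            exact Nat.mul_le_mul_left _ (hvle k d)
      _ = E * ∑ d ∈ D, d := by rw [← Finset.sum_mul]; ring
      _ ≤ E * ((M+1) * 2 ^ (m+1)) := Nat.mul_le_mul_left _ hsumD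
    have h2 := hφmul k
    rcases Nat.lt_or_ge ((M+1) * 2 ^ (m+1)) (φ k) with h | h
    · exfalso
      have : E * ((M+1) * 2 ^ (m+1)) < E * φ k := by
        exact (Nat.mul_lt_mul_left hEpos).mpr h
      omega
    · exact h
  have hφper : φ ℓ = φ 0 := by
    have : Φ ℓ = Φ 0 := by
      apply Finset.sum_congr rfl
      intro d _
      have : v ℓ d = v 0 d := by
        simp only [hv]
        rw [iter_period hl (hsol.bounded d)]
        simp
      rw [this]
    simp only [hφdef, this]
  -- the per-step inequality
  have hstep : ∀ k, 2 + eta M m (φ (k+1)) ≤ (2*m+1) * w k + eta M m (φ k) := by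
    intro k
    set S : Finset ℕ := D.filter (fun d => ebit ℓ (v k d) = 1) with hS
    have hcs : c k = ∑ d ∈ S, d := by
      rw [hS, Finset.sum_filter, hc]
      apply Finset.sum_congr rfl
      intro d _
      rcases Nat.le_one_iff_eq_zero_or_eq_one.mp (ebit_le_one ℓ (v k d)) with h | h <;>
        simp [h]
    have hws : w k = S.card := by
      rw [hS, Finset.card_filter, hw]
      apply Finset.sum_congr rfl
      intro d _
      rcases Nat.le_one_iff_eq_zero_or_eq_one.mp (ebit_le_one ℓ (v k d)) with h | h <;>
        simp [h]
    apply step hm hM1 hM2 hModd (φ k) (φ (k+1)) (c k) (w k) (hφpos k) (hφpos (k+1))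
      (hφB k) (hφB (k+1)) (hφrec k)
    rcases Nat.lt_or_ge S.card 1 with h0 | h1
    · left
      have hS0 : S = ∅ := Finset.card_eq_zero.mp (by omega)
      constructor
      · rw [hws, hS0]; simp
      · rw [hcs, hS0]; simp
    rcases Nat.lt_or_ge S.card 2 with h1' | h2
    · right; left
      have : S.card = 1 := by omega
      obtain ⟨d₀, hd₀⟩ := Finset.card_eq_one.mp this
      have hd₀D : d₀ ∈ D := by
        have : d₀ ∈ S := by rw [hd₀]; exact Finset.mem_singleton_self d₀
        exact Finset.mem_of_mem_filter d₀ this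
      obtain ⟨ho, hle, hne⟩ := hsub d₀ hd₀D
      have hceq : c k = d₀ := by rw [hcs, hd₀, Finset.sum_singleton]
      refine ⟨by omega, by omega, by omega, by rw [hceq]; exact hne⟩
    · right; right
      constructor
      · omega
      · rw [hcs, hws]
        have := Finset.sum_le_card_nsmul S id M (by
          intro x hx
          exact (hsub x (Finset.mem_of_mem_filter x hx)).2.1)
        simpa using this
  -- sum the per-step inequality over a period
  have hsum : ∑ k ∈ Finset.range ℓ, (2 + eta M m (φ (k+1)))
      ≤ ∑ k ∈ Finset.range ℓ, ((2*m+1) * w k + eta M m (φ k)) :=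
    Finset.sum_le_sum (fun k _ => hstep k)
  have hL : ∑ k ∈ Finset.range ℓ, (2 + eta M m (φ (k+1)))
      = 2 * ℓ + ∑ k ∈ Finset.range ℓ, eta M m (φ (k+1)) := by
    rw [Finset.sum_add_distrib, Finset.sum_const, Finset.card_range, smul_eq_mul]
    ring
  have hR : ∑ k ∈ Finset.range ℓ, ((2*m+1) * w k + eta M m (φ k))
      = (2*m+1) * (∑ k ∈ Finset.range ℓ, w k) + ∑ k ∈ Finset.range ℓ, eta M m (φ k) := by
    rw [Finset.sum_add_distrib, Finset.mul_sum]
  have htel : ∑ k ∈ Finset.range ℓ, eta M m (φ (k+1)) + eta M m (φ 0)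
      = ∑ k ∈ Finset.range ℓ, eta M m (φ k) + eta M m (φ ℓ) := by
    have h1 := Finset.sum_range_succ (fun k => eta M m (φ k)) ℓ
    have h2 := Finset.sum_range_succ' (fun k => eta M m (φ k)) ℓ
    omega
  have hwt : ∑ k ∈ Finset.range ℓ, w k = weight D U := by
    rw [hw]
    simp only
    rw [Finset.sum_comm]
    unfold weight
    apply Finset.sum_congr rfl
    intro d _
    exact sum_ebit hl (hsol.bounded d)
  rw [hφper] at htel
  rw [hL, hR, hwt] at hsum
  omega
lemma memD {m M x : ℕ} :
    x ∈ (oddUpTo M).erase (2 ^ (m+1) - 1) ↔ (x ≠ 2 ^ (m+1) - 1 ∧ x % 2 = 1 ∧ x ≤ M) := by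
  unfold oddUpTo
  rw [Finset.mem_erase, Finset.mem_filter, Finset.mem_range]
  omega

lemma lower_main {m M : ℕ} (hm : 15 ≤ m) (hM1 : 3 * 2 ^ m ≤ M + 1)
    (hM2 : M + 9 ≤ 2 ^ (m+2)) (hModd : M % 2 = 1)
    (ℓ : ℕ) (U : ℕ → ℕ) (hsol : IsSolution ((oddUpTo M).erase (2 ^ (m+1) - 1)) ℓ U) :
    2 * ℓ ≤ (2*m+1) * weight ((oddUpTo M).erase (2 ^ (m+1) - 1)) U := by
  apply lower_abstract hm hM1 hM2 hModd _ _ _ U hsol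
  · intro x hx
    rw [memD] at hx
    exact ⟨hx.2.1, hx.2.2, hx.1⟩
  · have hsub1 : (oddUpTo M).erase (2 ^ (m+1) - 1) ⊆ Finset.range (M+1) := by
      intro x hx
      rw [memD] at hx
      rw [Finset.mem_range]
      omega
    have h1 : ∑ x ∈ (oddUpTo M).erase (2 ^ (m+1) - 1), x ≤ ∑ x ∈ Finset.range (M+1), x :=
      Finset.sum_le_sum_of_subset hsub1
    have h2 : (∑ x ∈ Finset.range (M+1), x) * 2 = (M+1) * M := by
      rw [Finset.sum_range_id_mul_two]
      simp
    have h3 : (M+1) * M ≤ (M+1) * 2^(m+2) := Nat.mul_le_mul_left _ (by omega)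
    have h4 : (M+1) * 2^(m+2) = 2 * ((M+1) * 2^(m+1)) := by
      rw [show m+2 = (m+1)+1 by omega, pow_succ]
      ring
    omega

lemma exists_main {m M : ℕ} (hm : 15 ≤ m) (hM1 : 3 * 2 ^ m ≤ M + 1)
    (hM2 : M + 9 ≤ 2 ^ (m+2)) (hModd : M % 2 = 1) :
    ∃ ℓ U, IsSolution ((oddUpTo M).erase (2 ^ (m+1) - 1)) ℓ U ∧
      2 * ℓ = (2*m+1) * weight ((oddUpTo M).erase (2 ^ (m+1) - 1)) U := by
  have hp1 : (2:ℕ)^(m+1) = 2 * 2^m := by rw [pow_add]; ring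
  have hp2 : (2:ℕ)^(m+2) = 4 * 2^m := by rw [pow_add]; ring
  have hpm : (16:ℕ) ≤ 2^m := by
    calc (16:ℕ) = 2^4 := by norm_num
    _ ≤ 2^m := Nat.pow_le_pow_right (by norm_num) (by omega)
  have hpme : (2:ℕ)^m = 2 * 2^(m-1) := by
    rw [← pow_succ']
    congr 1
    omega
  set D := (oddUpTo M).erase (2 ^ (m+1) - 1) with hD
  set a := 2^(m+1) - 3 with ha
  set b := 3 * 2^m - 1 with hb
  clear_value a b
  have hab : a ≠ b := by omega
  have haD : a ∈ D := by rw [hD, memD]; omega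
  have hbD : b ∈ D := by rw [hD, memD]; omega
  have hE : (2:ℕ)^(2*m+1) = 2 * (2^m * 2^m) := by
    rw [show 2*m+1 = m+m+1 by omega, pow_succ, pow_add]
    ring
  have hbound : 2^m + 1 ≤ 2^(2*m+1) := by
    have := Nat.mul_le_mul_left (2^m) hpm
    omega
  set U := sol2 a (2^m) b 1 with hU
  have hUa : U a = 2^m := by rw [hU]; unfold sol2; rw [if_pos rfl]
  have hUb : U b = 1 := by
    rw [hU]; unfold sol2; rw [if_neg (Ne.symm hab), if_pos rfl]
  have hU0 : ∀ x, x ≠ a → x ≠ b → U x = 0 := by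
    intro x h1 h2
    rw [hU]; unfold sol2; rw [if_neg h1, if_neg h2]
  have hpair : ({a, b} : Finset ℕ) ⊆ D := by
    intro x hx
    rw [Finset.mem_insert, Finset.mem_singleton] at hx
    rcases hx with h | h
    · exact h ▸ haD
    · exact h ▸ hbD
  have hsum : ∑ d ∈ D, d * U d = 2^(2*m+1) - 1 := by
    rw [← Finset.sum_subset hpair (by
      intro x _ hx
      rw [Finset.mem_insert, Finset.mem_singleton] at hx
      push_neg at hx
      rw [hU0 x hx.1 hx.2]
      ring)]
    rw [Finset.sum_pair hab, hUa, hUb]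
    have e3 : a * 2^m = (2*2^m-3) * 2^m := by rw [ha, hp1]
    have e1 : (2*2^m - 3) * 2^m = 2*(2^m*2^m) - 3*2^m := by
      rw [Nat.sub_mul]
      ring_nf
    rw [mul_one, e3, e1, hE, hb]
    have hge : 3*2^m ≤ 2*(2^m*2^m) := by nlinarith [hpm]
    generalize hX : 2^m * 2^m = X
    rw [hX] at hge
    omega
  have hwt : weight D U = 2 := by
    unfold weight
    rw [← Finset.sum_subset hpair (by
      intro x _ hx
      rw [Finset.mem_insert, Finset.mem_singleton] at hx
      push_neg at hx
      rw [hU0 x hx.1 hx.2, s2_zero])]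
    rw [Finset.sum_pair hab, hUa, hUb, s2_two_pow, s2_one]
  refine ⟨2*m+1, U, ⟨by omega, ?_, ?_, ?_, ?_⟩, ?_⟩
  · intro d
    by_cases h1 : d = a
    · rw [h1, hUa]; omega
    by_cases h2 : d = b
    · rw [h2, hUb]; omega
    · rw [hU0 d h1 h2]; omega
  · intro d hd
    by_cases h1 : d = a
    · exact absurd (h1 ▸ haD) hd
    by_cases h2 : d = b
    · exact absurd (h2 ▸ hbD) hd
    · exact hU0 d h1 h2
  · rw [hsum]
  · rw [hsum]; omega
  · rw [hwt]
    omega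
end PLemmas
end Shift
end D2A

/-- For `n` large enough and odd `d` with `3·2^{n−1} − 1 ≤ d < 2^{n+1} − 7`, the
2-density of `D = {i : 1 ≤ i ≤ d, i odd} \ {2^n − 1}` is `2/(2n−1)`: every solution of
length `ℓ` satisfies `(2n−1)·s(U) ≥ 2ℓ`, and some solution attains equality. -/
theorem density_case_ii :
    ∃ N : ℕ, ∀ n : ℕ, N ≤ n → ∀ d : ℕ, d % 2 = 1 →
      3 * 2 ^ (n - 1) - 1 ≤ d → d < 2 ^ (n + 1) - 7 →
      (∀ ℓ U, IsSolution ((oddUpTo d).erase (2 ^ n - 1)) ℓ U →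
        2 * ℓ ≤ (2 * n - 1) * weight ((oddUpTo d).erase (2 ^ n - 1)) U) ∧
      (∃ ℓ U, IsSolution ((oddUpTo d).erase (2 ^ n - 1)) ℓ U ∧
        2 * ℓ = (2 * n - 1) * weight ((oddUpTo d).erase (2 ^ n - 1)) U) := by
  refine ⟨16, ?_⟩
  intro n hn d hd2 hd1 hd3
  obtain ⟨m, rfl⟩ : ∃ m, n = m + 1 := ⟨n - 1, by omega⟩
  have hm : 15 ≤ m := by omega
  simp only [Nat.add_sub_cancel] at hd1
  have hp2 : (2:ℕ)^(m+2) = 4 * 2^m := by rw [pow_add]; ring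
  have hpm : (1:ℕ) ≤ 2^m := Nat.one_le_two_pow
  have hM1 : 3 * 2 ^ m ≤ d + 1 := by omega
  have hM2 : d + 9 ≤ 2 ^ (m+2) := by
    have e : (2:ℕ)^(m+1+1) = 2^(m+2) := by congr 1
    omega
  have heq : 2*(m+1) - 1 = 2*m+1 := by omega
  constructor
  · intro ℓ U hsol
    have h := D2A.lower_main hm hM1 hM2 hd2 ℓ U hsol
    rw [heq]
    exact h
  · obtain ⟨ℓ, U, hs, he⟩ := D2A.exists_main hm hM1 hM2 hd2
    exact ⟨ℓ, U, hs, by rw [heq]; exact he⟩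
end

section
/- There exists N such that for all n ≥ N and every odd integer d with 3·2^{n−1} − 1 ≤ d < 2^{n+1} − 7, the 2-density of the set D := {i : 1 ≤ i ≤ d, i odd} \ {2^n − 3, 2^n − 1} equals 1/(n−1); that is, every solution U of any length ℓ for D satisfies (n−1)·s(U) ≥ ℓ, and some solution attains (n−1)·s(U) = ℓ. -/
namespace DensityAux

/-- indicator of the top bit -/
def eps (ℓ u : ℕ) : ℕ := if 2 ^ (ℓ - 1) ≤ u then 1 else 0

lemma eps_le_one (ℓ u : ℕ) : eps ℓ u ≤ 1 := by unfold eps; split <;> omega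

lemma s2_zero : s2 0 = 0 := by simp [s2]

lemma s2_one : s2 1 = 1 := by simp [s2]

lemma s2_rec (u : ℕ) (hu : u ≠ 0) : s2 u = u % 2 + s2 (u / 2) := by
  unfold s2
  rw [Nat.digits_def' (by norm_num : (1:ℕ) < 2) (Nat.pos_of_ne_zero hu)]
  simp

lemma s2_pow_sub_one (ℓ : ℕ) : s2 (2 ^ ℓ - 1) = ℓ := by
  induction ℓ with
  | zero => simpa using s2_zero
  | succ m ih =>
    have h2 : (2:ℕ) ^ (m+1) = 2 * 2 ^ m := by ring
    have hp : (1:ℕ) ≤ 2 ^ m := Nat.one_le_two_pow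
    have hne : 2 ^ (m+1) - 1 ≠ 0 := by omega
    rw [s2_rec _ hne]
    have e1 : (2 ^ (m+1) - 1) % 2 = 1 := by omega
    have e2 : (2 ^ (m+1) - 1) / 2 = 2 ^ m - 1 := by omega
    rw [e1, e2, ih]
    omega

lemma s2_eq_sum_bits : ∀ L u, u < 2 ^ L → s2 u = ∑ j ∈ Finset.range L, u / 2 ^ j % 2 := by
  intro L
  induction L with
  | zero => intro u hu; interval_cases u; simp [s2_zero]
  | succ L ih =>
    intro u hu
    rcases Nat.eq_zero_or_pos u with h0 | h0
    · subst h0; simp [s2_zero]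
    rw [Finset.sum_range_succ']
    have hrw : ∀ j, u / 2 ^ (j+1) % 2 = (u / 2) / 2 ^ j % 2 := by
      intro j
      rw [Nat.div_div_eq_div_mul, pow_succ']
    simp only [hrw, pow_zero, Nat.div_one]
    have hu2 : u / 2 < 2 ^ L := by
      have : (2:ℕ) ^ (L+1) = 2 ^ L * 2 := by ring
      omega
    rw [← ih (u/2) hu2, s2_rec u (by omega)]
    omega

section Shift

variable {ℓ : ℕ}

lemma q_pos (hl : 1 ≤ ℓ) : 1 ≤ 2 ^ ℓ - 1 := by
  have : (2:ℕ) ^ 1 ≤ 2 ^ ℓ := Nat.pow_le_pow_right (by norm_num) hl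
  omega

lemma q_odd (hl : 1 ≤ ℓ) : (2 ^ ℓ - 1) % 2 = 1 := by
  have h2 : (2:ℕ) ^ ℓ = 2 * 2 ^ (ℓ - 1) := by
    rw [← pow_succ']
    congr 1
    omega
  have hp : (1:ℕ) ≤ 2 ^ (ℓ-1) := Nat.one_le_two_pow
  omega

lemma pow_pred_le (hl : 1 ≤ ℓ) : 2 ^ (ℓ - 1) ≤ 2 ^ ℓ - 1 := by
  have h2 : (2:ℕ) ^ ℓ = 2 * 2 ^ (ℓ - 1) := by
    rw [← pow_succ']; congr 1; omega
  have hp : (1:ℕ) ≤ 2 ^ (ℓ-1) := Nat.one_le_two_pow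
  omega

/-- fundamental identity: doubling = shift + q·(top bit) -/
lemma shift2_eq (hl : 1 ≤ ℓ) (u : ℕ) (hu : u ≤ 2 ^ ℓ - 1) :
    2 * u = shift2 ℓ u + (2 ^ ℓ - 1) * eps ℓ u := by
  have h2 : (2:ℕ) ^ ℓ = 2 * 2 ^ (ℓ - 1) := by
    rw [← pow_succ']; congr 1; omega
  have hp : (1:ℕ) ≤ 2 ^ (ℓ-1) := Nat.one_le_two_pow
  unfold shift2 eps
  by_cases hq : u = 2 ^ ℓ - 1
  · rw [if_pos hq, if_pos (by omega)]
    omega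
  · rw [if_neg hq]
    have hu' : u < 2 ^ ℓ - 1 := lt_of_le_of_ne hu hq
    by_cases he : 2 ^ (ℓ - 1) ≤ u
    · rw [if_pos he]
      have hle : 2 ^ ℓ - 1 ≤ 2 * u := by omega
      have hlt : 2 * u - (2 ^ ℓ - 1) < 2 ^ ℓ - 1 := by omega
      rw [Nat.mod_eq_sub_mod hle, Nat.mod_eq_of_lt hlt]
      omega
    · rw [if_neg he]
      have : 2 * u < 2 ^ ℓ - 1 := by omega
      rw [Nat.mod_eq_of_lt this]
      omega

lemma shift2_le (hl : 1 ≤ ℓ) (u : ℕ) (hu : u ≤ 2 ^ ℓ - 1) : shift2 ℓ u ≤ 2 ^ ℓ - 1 := by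
  unfold shift2
  split
  · exact hu
  · exact le_of_lt (Nat.mod_lt _ (q_pos hl))

lemma shift2_pos (hl : 1 ≤ ℓ) (u : ℕ) (h0 : 0 < u) (hu : u ≤ 2 ^ ℓ - 1) : 0 < shift2 ℓ u := by
  unfold shift2
  split
  · exact h0
  · rename_i hne
    have hu' : u < 2 ^ ℓ - 1 := lt_of_le_of_ne hu hne
    rcases Nat.eq_zero_or_pos ((2 * u) % (2 ^ ℓ - 1)) with h | h
    · exfalso
      have hdvd : (2 ^ ℓ - 1) ∣ 2 * u := Nat.dvd_of_mod_eq_zero h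
      obtain ⟨k, hk⟩ := hdvd
      have hqpos := q_pos hl
      have hqodd := q_odd hl
      have hk2 : k < 2 := by
        have : (2 ^ ℓ - 1) * k < (2 ^ ℓ - 1) * 2 := by omega
        exact Nat.lt_of_mul_lt_mul_left this
      interval_cases k <;> omega
    · exact h

lemma iter_le (hl : 1 ≤ ℓ) (u : ℕ) (hu : u ≤ 2 ^ ℓ - 1) (k : ℕ) :
    (shift2 ℓ)^[k] u ≤ 2 ^ ℓ - 1 := by
  induction k with
  | zero => simpa
  | succ m ih => rw [Function.iterate_succ_apply']; exact shift2_le hl _ ih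

lemma iter_pos (hl : 1 ≤ ℓ) (u : ℕ) (h0 : 0 < u) (hu : u ≤ 2 ^ ℓ - 1) (k : ℕ) :
    0 < (shift2 ℓ)^[k] u := by
  induction k with
  | zero => simpa
  | succ m ih =>
    rw [Function.iterate_succ_apply']
    exact shift2_pos hl _ ih (iter_le hl u hu m)

lemma iter_fixed (k : ℕ) : (shift2 ℓ)^[k] (2 ^ ℓ - 1) = 2 ^ ℓ - 1 := by
  induction k with
  | zero => simp
  | succ m ih =>
    rw [Function.iterate_succ_apply', ih]
    unfold shift2
    rw [if_pos rfl]

lemma iter_formula (hl : 1 ≤ ℓ) (u : ℕ) (hu : u < 2 ^ ℓ - 1) (k : ℕ) :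
    (shift2 ℓ)^[k] u = 2 ^ k * u % (2 ^ ℓ - 1) := by
  induction k with
  | zero => simpa using (Nat.mod_eq_of_lt hu).symm
  | succ m ih =>
    rw [Function.iterate_succ_apply', ih]
    have hlt : 2 ^ m * u % (2 ^ ℓ - 1) < 2 ^ ℓ - 1 := Nat.mod_lt _ (q_pos hl)
    unfold shift2
    rw [if_neg (by omega)]
    conv_rhs => rw [pow_succ', mul_assoc]
    exact Nat.mul_mod_mod 2 (2 ^ m * u) (2 ^ ℓ - 1)

lemma iter_id (hl : 1 ≤ ℓ) (u : ℕ) (hu : u ≤ 2 ^ ℓ - 1) : (shift2 ℓ)^[ℓ] u = u := by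
  rcases eq_or_lt_of_le hu with h | h
  · rw [h]; exact iter_fixed ℓ
  · rw [iter_formula hl u h]
    have h1 : (1:ℕ) ≤ 2 ^ ℓ := Nat.one_le_two_pow
    have : 2 ^ ℓ * u = (2 ^ ℓ - 1) * u + u := by
      have : 2 ^ ℓ * u = ((2 ^ ℓ - 1) + 1) * u := by congr 1; omega
      rw [this]; ring
    rw [this, Nat.mul_add_mod]
    exact Nat.mod_eq_of_lt h

end Shift

end DensityAux

namespace DensityAux

section Count

variable {ℓ : ℕ}

lemma eps_iter_eq_bit (hl : 1 ≤ ℓ) (u : ℕ) (hu : u < 2 ^ ℓ - 1) (k : ℕ) (hk : k < ℓ) :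
    eps ℓ ((shift2 ℓ)^[k] u) = u / 2 ^ (ℓ - 1 - k) % 2 := by
  rw [iter_formula hl u hu]
  set q := 2 ^ ℓ - 1 with hqdef
  set m := ℓ - k with hmdef
  have hm1 : 1 ≤ m := by omega
  have hkm : k + m = ℓ := by omega
  set A := u / 2 ^ m with hA
  set B := u % 2 ^ m with hB
  have hAB : 2 ^ m * A + B = u := Nat.div_add_mod u (2 ^ m)
  have hBlt : B < 2 ^ m := Nat.mod_lt _ (Nat.pow_pos (n := m) (by norm_num))
  have hpow : 2 ^ k * 2 ^ m = 2 ^ ℓ := by rw [← pow_add, hkm]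
  have hq1 : q + 1 = 2 ^ ℓ := by
    have : (1:ℕ) ≤ 2 ^ ℓ := Nat.one_le_two_pow
    omega
  have key : 2 ^ m * (A + 2 ^ k * B) = u + q * B := by
    calc 2 ^ m * (A + 2 ^ k * B) = 2 ^ m * A + (2 ^ k * 2 ^ m) * B := by ring
      _ = 2 ^ m * A + (q + 1) * B := by rw [hpow, hq1]
      _ = (2 ^ m * A + B) + q * B := by ring
      _ = u + q * B := by rw [hAB]
  have hlt : A + 2 ^ k * B < q := by
    have h1 : u + q * B < q * (B + 1) := by
      have : q * (B+1) = q * B + q := by ring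
      omega
    have h2 : q * (B + 1) ≤ q * 2 ^ m := Nat.mul_le_mul_left q (by omega)
    have h3 : 2 ^ m * (A + 2 ^ k * B) < 2 ^ m * q := by
      rw [key]; calc u + q * B < q * (B+1) := h1
        _ ≤ q * 2 ^ m := h2
        _ = 2 ^ m * q := by ring
    exact Nat.lt_of_mul_lt_mul_left h3
  have hmod : 2 ^ k * u % q = A + 2 ^ k * B := by
    have hsplit : 2 ^ k * u = q * A + (A + 2 ^ k * B) := by
      calc 2 ^ k * u = 2 ^ k * (2 ^ m * A + B) := by rw [hAB]
        _ = (2 ^ k * 2 ^ m) * A + 2 ^ k * B := by ring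
        _ = (q + 1) * A + 2 ^ k * B := by rw [hpow, hq1]
        _ = q * A + (A + 2 ^ k * B) := by ring
    rw [hsplit, Nat.mul_add_mod, Nat.mod_eq_of_lt hlt]
  rw [hmod]
  -- now identify the top bit
  have hm2 : 2 ^ (m - 1) * 2 = 2 ^ m := by
    rw [← pow_succ]; congr 1; omega
  have hl1k : ℓ - 1 - k = m - 1 := by omega
  have hpow2 : 2 ^ k * 2 ^ (m - 1) = 2 ^ (ℓ - 1) := by
    rw [← pow_add]; congr 1; omega
  have hdiv : u / 2 ^ (m - 1) % 2 = B / 2 ^ (m - 1) := by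
    have := Nat.mod_mul_right_div_self u (2 ^ (m-1)) 2
    rw [hm2] at this
    rw [← this, ← hB]
  have hAlt : A < 2 ^ k := by
    have h1 : 2 ^ m * A ≤ u := by omega
    have h2 : u < 2 ^ ℓ := by omega
    have h3 : 2 ^ m * A < 2 ^ m * 2 ^ k := by
      rw [(by ring : 2 ^ m * 2 ^ k = 2 ^ k * 2 ^ m), hpow]; omega
    exact Nat.lt_of_mul_lt_mul_left h3
  rw [hl1k, hdiv]
  by_cases hBc : 2 ^ (m - 1) ≤ B
  · have h1 : 2 ^ (ℓ - 1) ≤ A + 2 ^ k * B := by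
      have : 2 ^ k * 2 ^ (m-1) ≤ 2 ^ k * B := Nat.mul_le_mul_left _ hBc
      rw [hpow2] at this
      exact le_trans this (Nat.le_add_left _ _)
    have h2 : B / 2 ^ (m-1) = 1 := by
      apply Nat.div_eq_of_lt_le
      · omega
      · omega
    rw [h2]
    unfold eps
    rw [if_pos h1]
  · have h2 : B / 2 ^ (m-1) = 0 := Nat.div_eq_of_lt (by omega)
    have h1 : A + 2 ^ k * B < 2 ^ (ℓ - 1) := by
      have hb1 : B + 1 ≤ 2 ^ (m-1) := by omega
      have : 2 ^ k * (B + 1) ≤ 2 ^ k * 2 ^ (m-1) := Nat.mul_le_mul_left _ hb1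
      rw [hpow2] at this
      have hx : 2 ^ k * (B+1) = 2 ^ k * B + 2 ^ k := by ring
      omega
    rw [h2]
    unfold eps
    rw [if_neg (by omega)]

lemma eps_count (hl : 1 ≤ ℓ) (u : ℕ) (hu : u ≤ 2 ^ ℓ - 1) :
    ∑ k ∈ Finset.range ℓ, eps ℓ ((shift2 ℓ)^[k] u) = s2 u := by
  rcases eq_or_lt_of_le hu with h | h
  · subst h
    have he : ∀ k ∈ Finset.range ℓ, eps ℓ ((shift2 ℓ)^[k] (2 ^ ℓ - 1)) = 1 := by
      intro k _
      rw [iter_fixed]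
      unfold eps
      rw [if_pos (pow_pred_le hl)]
    rw [Finset.sum_congr rfl he, s2_pow_sub_one]
    simp
  · have he : ∀ k ∈ Finset.range ℓ, eps ℓ ((shift2 ℓ)^[k] u) = u / 2 ^ (ℓ - 1 - k) % 2 := by
      intro k hk
      exact eps_iter_eq_bit hl u h k (Finset.mem_range.mp hk)
    rw [Finset.sum_congr rfl he]
    rw [Finset.sum_range_reflect (fun j => u / 2 ^ j % 2) ℓ]
    have hu2 : u < 2 ^ ℓ := by
      have : (1:ℕ) ≤ 2 ^ ℓ := Nat.one_le_two_pow
      omega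
    exact (s2_eq_sum_bits ℓ u hu2).symm

end Count

end DensityAux

namespace DensityAux

/-- potential function: `log₂ ψ` if `ψ` is a power of two, else `log₂ ψ - 1`. -/
def theta (ψ : ℕ) : ℕ :=
  if 2 ^ (Nat.log 2 ψ) = ψ then Nat.log 2 ψ else Nat.log 2 ψ - 1

lemma theta_le_log (ψ : ℕ) : theta ψ ≤ Nat.log 2 ψ := by
  unfold theta; split <;> omega

lemma log_le_theta_add_one (ψ : ℕ) : Nat.log 2 ψ ≤ theta ψ + 1 := by
  unfold theta; split <;> omega

lemma theta_two_mul (ψ : ℕ) (hψ : ψ ≠ 0) : theta (2 * ψ) = theta ψ + 1 := by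
  have hlog : Nat.log 2 (2 * ψ) = Nat.log 2 ψ + 1 := by
    rw [mul_comm]
    exact Nat.log_mul_base (by norm_num) hψ
  unfold theta
  rw [hlog]
  have hiff : (2 ^ (Nat.log 2 ψ + 1) = 2 * ψ) ↔ (2 ^ (Nat.log 2 ψ) = ψ) := by
    rw [pow_succ]
    constructor <;> intro h <;> omega
  by_cases hp : 2 ^ (Nat.log 2 ψ) = ψ
  · rw [if_pos (hiff.mpr hp), if_pos hp]
  · rw [if_neg (fun h => hp (hiff.mp h)), if_neg hp]
    have h1 : 1 ≤ Nat.log 2 ψ ∨ Nat.log 2 ψ = 0 := by omega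
    rcases h1 with h1 | h1
    · omega
    · -- log = 0 and not power: ψ = 1 would be power; so ψ ≥ 1, log 0 nonpower means contradiction? ψ could be 1: 2^0=1=ψ power. so impossible; but also ψ≥2 → log ≥ 1.
      exfalso
      rcases Nat.lt_or_ge ψ 2 with h2 | h2
      · interval_cases ψ
        · exact hψ rfl
        · exact hp (by simpa using h1 ▸ (by norm_num : (2:ℕ)^0 = 1))
      · have := (Nat.le_log_iff_pow_le (by norm_num) (by omega)).mp (le_refl (Nat.log 2 ψ))
        have h3 : 1 ≤ Nat.log 2 ψ := by
          rw [Nat.le_log_iff_pow_le (by norm_num) (by omega)]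
          simpa using h2
        omega

lemma theta_eq_zero (ψ : ℕ) (hψ : 1 ≤ ψ) (h : theta ψ = 0) : ψ = 1 ∨ ψ = 3 := by
  have hlog : Nat.log 2 ψ ≤ 1 := by
    have := log_le_theta_add_one ψ
    omega
  have hψ4 : ψ < 4 := by
    have := Nat.lt_pow_succ_log_self (by norm_num : 1 < 2) ψ
    have h2 : (2:ℕ) ^ (Nat.log 2 ψ + 1) ≤ 2 ^ 2 := Nat.pow_le_pow_right (by norm_num) (by omega)
    omega
  interval_cases ψ
  · left; rfl
  · exfalso
    have hl : Nat.log 2 2 = 1 := Nat.log_eq_of_pow_le_of_lt_pow (by norm_num) (by norm_num)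
    unfold theta at h
    rw [hl] at h
    norm_num at h
  · right; rfl

lemma theta_eq_one_odd (ψ : ℕ) (hodd : ψ % 2 = 1) (h : theta ψ = 1) : ψ = 5 ∨ ψ = 7 := by
  have hψ0 : ψ ≠ 0 := by omega
  have hlog : Nat.log 2 ψ ≤ 2 := by
    have := log_le_theta_add_one ψ
    omega
  have hψ8 : ψ < 8 := by
    have := Nat.lt_pow_succ_log_self (by norm_num : 1 < 2) ψ
    have h2 : (2:ℕ) ^ (Nat.log 2 ψ + 1) ≤ 2 ^ 3 := Nat.pow_le_pow_right (by norm_num) (by omega)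
    omega
  have hone : theta 1 = 0 := by
    unfold theta
    norm_num
  have hthree : theta 3 = 0 := by
    have hl : Nat.log 2 3 = 1 := Nat.log_eq_of_pow_le_of_lt_pow (by norm_num) (by norm_num)
    unfold theta
    rw [hl]
    norm_num
  interval_cases ψ <;> simp_all <;> omega
  
end DensityAux

namespace DensityAux

/-- The key local inequality for the potential `theta`. -/
lemma step_lemma (n : ℕ) (hn : 16 ≤ n) (ψ ψ' S c : ℕ)
    (hψ : 1 ≤ ψ) (hψ' : 1 ≤ ψ')
    (heq : 2 * ψ = ψ' + S)
    (h0 : c = 0 → S = 0)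
    (h1 : 1 ≤ c → c ≤ S ∧ S ≤ c * (2 ^ (n+1) - 8))
    (h2 : c = 1 → S % 2 = 1 ∧ S ≠ 2 ^ n - 1 ∧ S ≠ 2 ^ n - 3) :
    1 + theta ψ ≤ (n - 1) * c + theta ψ' := by
  have hp1 : (2:ℕ) ^ (n+1) = 2 * 2 ^ n := by ring
  have hpn : (2:ℕ) ^ 16 ≤ 2 ^ n := Nat.pow_le_pow_right (by norm_num) hn
  have hpn' : (65536:ℕ) ≤ 2 ^ n := by norm_num at hpn ⊢; exact hpn
  set L := Nat.log 2 ψ with hLdef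
  have hL1 : 2 ^ L ≤ ψ := Nat.pow_log_le_self 2 (by omega)
  have hL2 : ψ < 2 ^ (L + 1) := Nat.lt_pow_succ_log_self (by norm_num) ψ
  have hLsucc : (2:ℕ) ^ (L+1) = 2 * 2 ^ L := by ring
  match c with
  | 0 =>
    have hS : S = 0 := h0 rfl
    have hψ'2 : ψ' = 2 * ψ := by omega
    rw [hψ'2, theta_two_mul ψ (by omega)]
    omega
  | 1 =>
    obtain ⟨hSodd, hSne1, hSne3⟩ := h2 rfl
    obtain ⟨hSlo, hShi⟩ := h1 (by norm_num)
    simp only [mul_one] at hShi ⊢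
    rcases lt_trichotomy L n with hLn | hLn | hLn
    · -- L < n
      by_cases hth : theta ψ + 2 ≤ n
      · have := theta_le_log ψ'
        omega
      · -- theta ψ = n - 1, and ψ must be the power 2^(n-1)
        have hthle : theta ψ ≤ L := theta_le_log ψ
        have hth1 : theta ψ = n - 1 := by omega
        have hLeq : L = n - 1 := by omega
        have hpow : 2 ^ L = ψ := by
          by_contra hc
          have hth2 : theta ψ = L - 1 := by
            unfold theta
            rw [← hLdef, if_neg hc]
          omega
        -- 2ψ = 2^n
        have h2ψ : 2 * ψ = 2 ^ n := by
          have hx : (2:ℕ) ^ (L+1) = 2 ^ n := by congr 1; omega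
          omega
        by_cases hth' : 1 ≤ theta ψ'
        · omega
        · exfalso
          rcases theta_eq_zero ψ' hψ' (by omega) with h | h <;> subst h <;> omega
    · -- L = n
      have hE : (2:ℕ) ^ L = 2 ^ n := by rw [hLn]
      by_cases hpow : 2 ^ L = ψ
      · -- ψ = 2^n
        have hθ : theta ψ = n := by
          unfold theta
          rw [if_pos hpow]
          omega
        have h2ψ : ψ' + S = 2 ^ (n+1) := by
          rw [← heq, hp1, ← hpow, hLn]
        by_cases h2' : 2 ≤ theta ψ'
        · omega
        · exfalso
          interval_cases h : theta ψ'
          · rcases theta_eq_zero ψ' hψ' h with hh | hh <;> subst hh <;> omega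
          · have hψodd : ψ' % 2 = 1 := by omega
            rcases theta_eq_one_odd ψ' hψodd h with hh | hh <;> subst hh <;> omega
      · -- ψ nonpower, 2^n < ψ
        have hθ : theta ψ = n - 1 := by
          unfold theta
          rw [if_neg hpow]
          omega
        by_cases hth' : 1 ≤ theta ψ'
        · omega
        · exfalso
          have hψlo : 2 ^ n + 1 ≤ ψ := by
            rcases lt_or_eq_of_le hL1 with hh | hh
            · omega
            · exact absurd hh hpow
          rcases theta_eq_zero ψ' hψ' (by omega) with h | h <;> subst h <;> omega
    · -- L > n
      have hps : (2:ℕ) ^ (n+1) ≤ 2 ^ L := Nat.pow_le_pow_right (by norm_num) (by omega)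
      have hψ'lo : 2 ^ L ≤ ψ' := by omega
      have hL' : L ≤ Nat.log 2 ψ' := (Nat.le_log_iff_pow_le (by norm_num) (by omega)).mpr hψ'lo
      have := log_le_theta_add_one ψ'
      have := theta_le_log ψ
      omega
  | (k+2) =>
    set c' := k + 2 with hc'
    obtain ⟨hSlo, hShi⟩ := h1 (by omega)
    have hc2 : 2 ≤ c' := by omega
    rcases le_or_gt L (n + c') with hcase | hcase
    · -- small L
      have hkey : n + c' + 1 ≤ (n - 1) * c' := by
        have hx1 : (n-1) * 2 ≤ (n-1) * c' := Nat.mul_le_mul_left _ hc2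
        have hx2 : 15 * c' ≤ (n-1) * c' := Nat.mul_le_mul_right _ (by omega)
        omega
      have := theta_le_log ψ
      omega
    · -- large L
      have hcpow : c' ≤ 2 ^ (c' - 1) := by
        have := Nat.lt_two_pow_self (n := c' - 1)
        omega
      have hS2 : S ≤ 2 ^ (n + c') := by
        have hx1 : S ≤ c' * 2 ^ (n+1) := le_trans hShi (Nat.mul_le_mul_left _ (by omega))
        have hx2 : c' * 2 ^ (n+1) ≤ 2 ^ (c'-1) * 2 ^ (n+1) := Nat.mul_le_mul_right _ hcpow
        have hx3 : (2:ℕ) ^ (c'-1) * 2 ^ (n+1) = 2 ^ (n + c') := by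
          rw [← pow_add]
          congr 1
          omega
        omega
      have hS3 : S ≤ 2 ^ (L - 1) := by
        have : (2:ℕ) ^ (n + c') ≤ 2 ^ (L - 1) := Nat.pow_le_pow_right (by norm_num) (by omega)
        omega
      have hLL : (2:ℕ) ^ L = 2 * 2 ^ (L-1) := by
        rw [← pow_succ']
        congr 1
        omega
      have hψ'lo : 2 ^ L ≤ ψ' := by omega
      have hL' : L ≤ Nat.log 2 ψ' := (Nat.le_log_iff_pow_le (by norm_num) (by omega)).mpr hψ'lo
      have h5 := log_le_theta_add_one ψ'
      have h6 := theta_le_log ψ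
      have hkey : 2 ≤ (n-1) * c' := by
        have : 2 * 1 ≤ (n-1) * c' := Nat.mul_le_mul (by omega) (by omega)
        omega
      omega

end DensityAux

namespace DensityAux

lemma lower_bound (n : ℕ) (hn : 16 ≤ n) (D : Finset ℕ)
    (hD : ∀ e ∈ D, e % 2 = 1 ∧ e ≤ 2 ^ (n+1) - 8 ∧ e ≠ 2 ^ n - 1 ∧ e ≠ 2 ^ n - 3)
    (ℓ : ℕ) (U : ℕ → ℕ) (hsol : IsSolution D ℓ U) :
    ℓ ≤ (n - 1) * weight D U := by
  obtain ⟨hl, hbd, hsupp, hdvd, hpos⟩ := hsol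
  set q := 2 ^ ℓ - 1 with hq
  have hqpos : 1 ≤ q := q_pos hl
  set F : ℕ → ℕ := fun k => ∑ d ∈ D, d * (shift2 ℓ)^[k] (U d) with hF
  set E : ℕ → ℕ := fun k => ∑ d ∈ D, d * eps ℓ ((shift2 ℓ)^[k] (U d)) with hE
  have hF0 : F 0 = ∑ d ∈ D, d * U d := by simp [hF]
  have hstep : ∀ k, 2 * F k = F (k+1) + q * E k := by
    intro k
    have hterm : ∀ d ∈ D, 2 * (d * (shift2 ℓ)^[k] (U d))
        = d * (shift2 ℓ)^[k+1] (U d) + q * (d * eps ℓ ((shift2 ℓ)^[k] (U d))) := by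
      intro d hd
      have hu : (shift2 ℓ)^[k] (U d) ≤ q := iter_le hl _ (hbd d) k
      have h2 := shift2_eq hl _ hu
      rw [Function.iterate_succ_apply']
      calc 2 * (d * (shift2 ℓ)^[k] (U d)) = d * (2 * (shift2 ℓ)^[k] (U d)) := by ring
        _ = d * (shift2 ℓ ((shift2 ℓ)^[k] (U d)) + q * eps ℓ ((shift2 ℓ)^[k] (U d))) := by
            rw [← hq] at h2
            rw [h2]
        _ = _ := by ring
    calc 2 * F k = ∑ d ∈ D, 2 * (d * (shift2 ℓ)^[k] (U d)) := by
          rw [hF]; exact Finset.mul_sum _ _ _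
      _ = ∑ d ∈ D, (d * (shift2 ℓ)^[k+1] (U d) + q * (d * eps ℓ ((shift2 ℓ)^[k] (U d)))) :=
          Finset.sum_congr rfl hterm
      _ = F (k+1) + q * E k := by
          rw [Finset.sum_add_distrib, ← Finset.mul_sum]
  have hFdvd : ∀ k, q ∣ F k := by
    intro k
    induction k with
    | zero => rw [hF0]; exact hdvd
    | succ m ih =>
      have h := hstep m
      have h2 : F (m+1) = 2 * F m - q * E m := by omega
      rw [h2]
      exact Nat.dvd_sub (Dvd.dvd.mul_left ih 2) (dvd_mul_right q (E m))
  obtain ⟨d0, hd0D, hd0⟩ : ∃ d ∈ D, d * U d ≠ 0 :=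
    Finset.exists_ne_zero_of_sum_ne_zero (by omega)
  have hd0pos : 0 < d0 ∧ 0 < U d0 := by
    have h := Nat.mul_ne_zero_iff.mp hd0
    omega
  have hFpos : ∀ k, 0 < F k := by
    intro k
    have hterm : 0 < d0 * (shift2 ℓ)^[k] (U d0) :=
      Nat.mul_pos hd0pos.1 (iter_pos hl _ hd0pos.2 (hbd d0) k)
    have hle : d0 * (shift2 ℓ)^[k] (U d0) ≤ F k := by
      rw [hF]
      exact Finset.single_le_sum (f := fun d => d * (shift2 ℓ)^[k] (U d))
        (fun i _ => Nat.zero_le _) hd0D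
    omega
  set ψ : ℕ → ℕ := fun k => F k / q with hψ
  have hψF : ∀ k, F k = q * ψ k := by
    intro k
    rw [hψ]
    exact (Nat.mul_div_cancel' (hFdvd k)).symm
  have hψpos : ∀ k, 1 ≤ ψ k := by
    intro k
    rw [hψ]
    simp only []
    rw [Nat.one_le_div_iff hqpos]
    exact Nat.le_of_dvd (hFpos k) (hFdvd k)
  have hψstep : ∀ k, 2 * ψ k = ψ (k+1) + E k := by
    intro k
    have h := hstep k
    rw [hψF k, hψF (k+1)] at h
    have h2 : q * (2 * ψ k) = q * (ψ (k+1) + E k) := by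
      calc q * (2 * ψ k) = 2 * (q * ψ k) := by ring
        _ = q * ψ (k+1) + q * E k := h
        _ = q * (ψ (k+1) + E k) := by ring
    exact Nat.eq_of_mul_eq_mul_left (by omega) h2
  -- the tops
  set T : ℕ → Finset ℕ := fun k => D.filter (fun d => 2 ^ (ℓ-1) ≤ (shift2 ℓ)^[k] (U d)) with hT
  have hET : ∀ k, E k = ∑ d ∈ T k, d := by
    intro k
    rw [hE, hT]
    simp only [eps, mul_ite, mul_one, mul_zero]
    exact (Finset.sum_filter _ _).symm
  have hcE : ∀ k, (T k).card ≤ E k := by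
    intro k
    rw [hET k, Finset.card_eq_sum_ones]
    apply Finset.sum_le_sum
    intro i hi
    have hiD : i ∈ D := Finset.mem_of_mem_filter i hi
    have := (hD i hiD).1
    omega
  have hEc : ∀ k, E k ≤ (T k).card * (2 ^ (n+1) - 8) := by
    intro k
    rw [hET k]
    have := Finset.sum_le_card_nsmul (T k) (fun d => d) (2 ^ (n+1) - 8) ?_
    · simpa using this
    · intro x hx
      exact (hD x (Finset.mem_of_mem_filter x hx)).2.1
  have hstepineq : ∀ k, 1 + theta (ψ k) ≤ (n-1) * (T k).card + theta (ψ (k+1)) := by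
    intro k
    apply step_lemma n hn (ψ k) (ψ (k+1)) (E k) ((T k).card) (hψpos k) (hψpos (k+1))
      (hψstep k)
    · intro hc
      rw [hET k, Finset.card_eq_zero.mp hc]
      simp
    · intro _
      exact ⟨hcE k, hEc k⟩
    · intro hc
      obtain ⟨a, ha⟩ := Finset.card_eq_one.mp hc
      have haT : a ∈ T k := by rw [ha]; exact Finset.mem_singleton_self a
      have haD : a ∈ D := Finset.mem_of_mem_filter a haT
      have hEa : E k = a := by rw [hET k, ha, Finset.sum_singleton]
      rw [hEa]
      exact ⟨(hD a haD).1, (hD a haD).2.2.1, (hD a haD).2.2.2⟩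
  -- counting: total number of tops = weight
  have hW : ∑ k ∈ Finset.range ℓ, (T k).card = weight D U := by
    have hck : ∀ k, (T k).card = ∑ d ∈ D, eps ℓ ((shift2 ℓ)^[k] (U d)) := by
      intro k
      rw [hT]
      simp only [eps]
      exact Finset.card_filter _ _
    calc ∑ k ∈ Finset.range ℓ, (T k).card
        = ∑ k ∈ Finset.range ℓ, ∑ d ∈ D, eps ℓ ((shift2 ℓ)^[k] (U d)) := by
          exact Finset.sum_congr rfl (fun k _ => hck k)
      _ = ∑ d ∈ D, ∑ k ∈ Finset.range ℓ, eps ℓ ((shift2 ℓ)^[k] (U d)) := Finset.sum_comm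
      _ = ∑ d ∈ D, s2 (U d) := Finset.sum_congr rfl (fun d _ => eps_count hl (U d) (hbd d))
      _ = weight D U := rfl
  -- periodicity
  have hψℓ : ψ ℓ = ψ 0 := by
    have hFℓ : F ℓ = F 0 := by
      rw [hF]
      simp only []
      apply Finset.sum_congr rfl
      intro d _
      rw [iter_id hl (U d) (hbd d), Function.iterate_zero_apply]
    rw [hψ]
    simp only [hFℓ]
  -- summing up
  have hsum := Finset.sum_le_sum (fun k (_ : k ∈ Finset.range ℓ) => hstepineq k)
  rw [Finset.sum_add_distrib, Finset.sum_add_distrib, Finset.sum_const, ← Finset.mul_sum] at hsum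
  rw [hW] at hsum
  have htel : ∑ k ∈ Finset.range ℓ, theta (ψ (k+1)) + theta (ψ 0)
      = ∑ k ∈ Finset.range ℓ, theta (ψ k) + theta (ψ ℓ) := by
    rw [← Finset.sum_range_succ' (fun k => theta (ψ k)) ℓ, Finset.sum_range_succ]
  rw [hψℓ] at htel
  simp only [Finset.card_range, smul_eq_mul, mul_one] at hsum
  omega

end DensityAux

/-- For `n` large enough and odd `d` with `3·2^{n−1} − 1 ≤ d < 2^{n+1} − 7`, the
2-density of `D = {i : 1 ≤ i ≤ d, i odd} \ {2^n − 3, 2^n − 1}` is `1/(n−1)`: every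
solution of length `ℓ` satisfies `(n−1)·s(U) ≥ ℓ`, and some solution attains
equality. -/
theorem density_case_ii_b :
    ∃ N : ℕ, ∀ n : ℕ, N ≤ n → ∀ d : ℕ, d % 2 = 1 →
      3 * 2 ^ (n - 1) - 1 ≤ d → d < 2 ^ (n + 1) - 7 →
      (∀ ℓ U, IsSolution (((oddUpTo d).erase (2 ^ n - 3)).erase (2 ^ n - 1)) ℓ U →
        ℓ ≤ (n - 1) * weight (((oddUpTo d).erase (2 ^ n - 3)).erase (2 ^ n - 1)) U) ∧
      (∃ ℓ U, IsSolution (((oddUpTo d).erase (2 ^ n - 3)).erase (2 ^ n - 1)) ℓ U ∧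
        ℓ = (n - 1) * weight (((oddUpTo d).erase (2 ^ n - 3)).erase (2 ^ n - 1)) U) := by
  refine ⟨16, ?_⟩
  intro n hn d hd2 hdlo hdhi
  have hp0 : (2:ℕ) ^ n = 2 * 2 ^ (n-1) := by
    rw [← pow_succ']; congr 1; omega
  have hp1 : (2:ℕ) ^ (n+1) = 2 * 2 ^ n := by ring
  have hp2 : (2:ℕ) ^ (n-1) = 2 * 2 ^ (n-2) := by
    rw [← pow_succ']; congr 1; omega
  have hpn : (65536:ℕ) ≤ 2 ^ n := by
    have h : (2:ℕ)^16 ≤ 2^n := Nat.pow_le_pow_right (by norm_num) hn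
    norm_num at h
    exact h
  set Dset := ((oddUpTo d).erase (2 ^ n - 3)).erase (2 ^ n - 1) with hDdef
  have hmem : ∀ e ∈ Dset, e % 2 = 1 ∧ e ≤ 2 ^ (n+1) - 8 ∧ e ≠ 2 ^ n - 1 ∧ e ≠ 2 ^ n - 3 := by
    intro e he
    rw [hDdef, Finset.mem_erase, Finset.mem_erase] at he
    obtain ⟨hne1, hne3, hee⟩ := he
    rw [oddUpTo, Finset.mem_filter, Finset.mem_range] at hee
    obtain ⟨her, hodd⟩ := hee
    exact ⟨hodd, by omega, hne1, hne3⟩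
  constructor
  · intro ℓ U hsol
    exact DensityAux.lower_bound n hn Dset hmem ℓ U hsol
  · set a := 2 ^ (n-1) - 1 with ha
    have haD : a ∈ Dset := by
      rw [hDdef, Finset.mem_erase, Finset.mem_erase, oddUpTo, Finset.mem_filter,
        Finset.mem_range]
      refine ⟨by omega, by omega, by omega, by omega⟩
    have hsum : ∑ e ∈ Dset, e * (if e = a then 1 else 0) = a := by
      rw [Finset.sum_eq_single_of_mem a haD (fun b _ hb => by rw [if_neg hb, mul_zero])]
      rw [if_pos rfl, mul_one]
    have hwt : weight Dset (fun x => if x = a then 1 else 0) = 1 := by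
      unfold weight
      rw [Finset.sum_eq_single_of_mem a haD
        (fun b _ hb => by
          show s2 (if b = a then 1 else 0) = 0
          rw [if_neg hb]; exact DensityAux.s2_zero)]
      show s2 (if a = a then 1 else 0) = 1
      rw [if_pos rfl]
      exact DensityAux.s2_one
    refine ⟨n - 1, fun x => if x = a then 1 else 0, ?_, ?_⟩
    · constructor
      · omega
      · intro e
        split
        · omega
        · omega
      · intro e heD
        rw [if_neg]
        intro hc
        subst hc
        exact heD haD
      · rw [hsum]
      · rw [hsum]
        omega
    · rw [hwt]
      omega
end
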